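/- arXiv:1703.10243 — 10 statements merged into one kernel-verified Lean document; each statement's English description precedes it below -/
import Mathlib

section
/- Let E be a real inner product space, V : E → ℝ a C¹ function with gradient ∇V, and y, z ∈ E. For a C¹ path q : [0,1] → E with q(0) = y, q(1) = z, define the optimal-control action A_oc(q) = ∫₀¹ (1/2)‖q'(t) + ∇V(q(t))‖² dt and the mechanics action A_m(q) = ∫₀¹ ((1/2)‖q'(t)‖² + (1/2)‖∇V(q(t))‖²) dt. Then a path q* (C¹, from y to z) minimizes A_oc over all C¹ paths from y to z if and only if it minimizes A_m over the same class of paths. -/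
lemma key_oc_m {E : Type*} [NormedAddCommGroup E] [InnerProductSpace ℝ E]
    (V : E → ℝ) (hV : ContDiff ℝ 1 V)
    (gradV : E → E) (hgrad : ∀ x, HasFDerivAt V (innerSL ℝ (gradV x)) x)
    (q : ℝ → E) (hq : ContDiff ℝ 1 q) :
    (∫ t in (0:ℝ)..1, (1/2) * ‖deriv q t + gradV (q t)‖^2)
      = (∫ t in (0:ℝ)..1, ((1/2) * ‖deriv q t‖^2 + (1/2) * ‖gradV (q t)‖^2))
        + (V (q 1) - V (q 0)) := by
  have hiso : Isometry (⇑(innerSL ℝ : E →L[ℝ] E →L[ℝ] ℝ)) :=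
    AddMonoidHomClass.isometry_of_norm _ (innerSL_apply_norm ℝ)
  have hgradc : Continuous gradV := by
    rw [hiso.isUniformInducing.isInducing.continuous_iff]
    have h1 : (fun x => (innerSL ℝ : E →L[ℝ] E →L[ℝ] ℝ) (gradV x))
        = fun x => fderiv ℝ V x := by
      funext x; exact ((hgrad x).fderiv).symm
    show Continuous (fun x => (innerSL ℝ : E →L[ℝ] E →L[ℝ] ℝ) (gradV x))
    rw [h1]
    exact hV.continuous_fderiv one_ne_zero
  have hq' : Continuous (deriv q) := hq.continuous_deriv le_rfl
  have hqc : Continuous q := hq.continuous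
  have hgq : Continuous (fun t => gradV (q t)) := hgradc.comp hqc
  -- integrability pieces
  have i1 : IntervalIntegrable (fun t => (1/2) * ‖deriv q t‖^2) MeasureTheory.volume 0 1 :=
    (continuous_const.mul ((hq'.norm).pow 2)).intervalIntegrable 0 1
  have i2 : IntervalIntegrable (fun t => (1/2) * ‖gradV (q t)‖^2) MeasureTheory.volume 0 1 :=
    (continuous_const.mul ((hgq.norm).pow 2)).intervalIntegrable 0 1
  have iinner : IntervalIntegrable (fun t => (inner ℝ (deriv q t) (gradV (q t)) : ℝ))
      MeasureTheory.volume 0 1 :=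
    (hq'.inner hgq).intervalIntegrable 0 1
  -- pointwise expansion
  have hpt : ∀ t : ℝ, (1/2) * ‖deriv q t + gradV (q t)‖^2
      = ((1/2) * ‖deriv q t‖^2 + (1/2) * ‖gradV (q t)‖^2)
        + (inner ℝ (deriv q t) (gradV (q t)) : ℝ) := by
    intro t
    have := norm_add_sq_real (deriv q t) (gradV (q t))
    nlinarith [this]
  -- FTC for the cross term
  have hftc : (∫ t in (0:ℝ)..1, (inner ℝ (deriv q t) (gradV (q t)) : ℝ))
      = V (q 1) - V (q 0) := by
    have hderiv : ∀ t ∈ Set.uIcc (0:ℝ) 1,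
        HasDerivAt (fun s => V (q s)) ((inner ℝ (deriv q t) (gradV (q t)) : ℝ)) t := by
      intro t _
      have hqd : HasDerivAt q (deriv q t) t :=
        ((hq.differentiable one_ne_zero) t).hasDerivAt
      have := (hgrad (q t)).comp_hasDerivAt t hqd
      rw [real_inner_comm]; exact this
    exact intervalIntegral.integral_eq_sub_of_hasDerivAt hderiv iinner
  calc (∫ t in (0:ℝ)..1, (1/2) * ‖deriv q t + gradV (q t)‖^2)
      = ∫ t in (0:ℝ)..1, (((1/2) * ‖deriv q t‖^2 + (1/2) * ‖gradV (q t)‖^2)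
          + (inner ℝ (deriv q t) (gradV (q t)) : ℝ)) := by
        simp only [hpt]
    _ = (∫ t in (0:ℝ)..1, ((1/2) * ‖deriv q t‖^2 + (1/2) * ‖gradV (q t)‖^2))
          + ∫ t in (0:ℝ)..1, (inner ℝ (deriv q t) (gradV (q t)) : ℝ) :=
        intervalIntegral.integral_add (i1.add i2) iinner
    _ = _ := by rw [hftc]

/-- Over C¹ paths from `y` to `z`, a path `qs` minimizes the
optimal-control action `A_oc(q) = ∫₀¹ (1/2)‖q' + ∇V(q)‖²` iff it minimizes the
mechanics action `A_m(q) = ∫₀¹ ((1/2)‖q'‖² + (1/2)‖∇V(q)‖²)`. -/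
theorem stmt2 {E : Type*} [NormedAddCommGroup E] [InnerProductSpace ℝ E]
    (V : E → ℝ) (hV : ContDiff ℝ 1 V)
    (gradV : E → E) (hgrad : ∀ x, HasFDerivAt V (innerSL ℝ (gradV x)) x)
    (y z : E) (qs : ℝ → E) (hqs : ContDiff ℝ 1 qs) (hqs0 : qs 0 = y) (hqs1 : qs 1 = z) :
    ((∀ q : ℝ → E, ContDiff ℝ 1 q → q 0 = y → q 1 = z →
        (∫ t in (0:ℝ)..1, (1/2) * ‖deriv qs t + gradV (qs t)‖^2)
          ≤ ∫ t in (0:ℝ)..1, (1/2) * ‖deriv q t + gradV (q t)‖^2)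
      ↔ (∀ q : ℝ → E, ContDiff ℝ 1 q → q 0 = y → q 1 = z →
        (∫ t in (0:ℝ)..1, ((1/2) * ‖deriv qs t‖^2 + (1/2) * ‖gradV (qs t)‖^2))
          ≤ ∫ t in (0:ℝ)..1, ((1/2) * ‖deriv q t‖^2 + (1/2) * ‖gradV (q t)‖^2))) := by
  have hk := fun (q : ℝ → E) (hq : ContDiff ℝ 1 q) => key_oc_m V hV gradV hgrad q hq
  constructor
  · intro h q hq hq0 hq1
    have := h q hq hq0 hq1
    rw [hk qs hqs, hk q hq, hqs0, hqs1, hq0, hq1] at this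
    linarith
  · intro h q hq hq0 hq1
    have := h q hq hq0 hq1
    rw [hk qs hqs, hk q hq, hqs0, hqs1, hq0, hq1]
    linarith
end

section
/- Let E be a real inner product space, V : E → ℝ a C¹ function with gradient ∇V, and y, z ∈ E. Over the class of C¹ paths q : [0,1] → E with q(0) = y, q(1) = z, define A_oc(q) = ∫₀¹ (1/2)‖q'(t) + ∇V(q(t))‖² dt, A_oc*(q) = ∫₀¹ (1/2)‖q'(t) − ∇V(q(t))‖² dt and A_m(q) = ∫₀¹ ((1/2)‖q'(t)‖² + (1/2)‖∇V(q(t))‖²) dt. Then inf A_oc = inf A_m + (V(z) − V(y)), inf A_oc* = inf A_m − (V(z) − V(y)), and consequently inf A_oc − inf A_oc* = 2 (V(z) − V(y)), where all infima are taken over the stated class of paths (and are real numbers, the actions being bounded below for fixed y, z when the infimum of A_m is finite). -/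
section Aux

variable {E : Type*} [NormedAddCommGroup E] [InnerProductSpace ℝ E]

lemma stmt3_grad_cont (V : E → ℝ) (hV : ContDiff ℝ 1 V)
    (gradV : E → E) (hgrad : ∀ x, HasFDerivAt V (innerSL ℝ (gradV x)) x) :
    Continuous gradV := by
  have h1 : Continuous (fun x => fderiv ℝ V x) := hV.continuous_fderiv one_ne_zero
  have h2 : ∀ x, fderiv ℝ V x = innerSL ℝ (gradV x) := fun x => (hgrad x).fderiv
  have h3 : Continuous (fun x => (innerSL ℝ (gradV x) : E →L[ℝ] ℝ)) := by
    simpa [h2] using h1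
  have hiso : Isometry (fun v : E => (innerSL ℝ v : E →L[ℝ] ℝ)) :=
    (InnerProductSpace.toDualMap ℝ E).isometry
  exact hiso.isEmbedding.continuous_iff.mpr h3

lemma stmt3_inner_integral (V : E → ℝ)
    (gradV : E → E) (hgrad : ∀ x, HasFDerivAt V (innerSL ℝ (gradV x)) x)
    (hgc : Continuous gradV)
    (q : ℝ → E) (hq : ContDiff ℝ 1 q) :
    (∫ t in (0:ℝ)..1, (inner ℝ (deriv q t) (gradV (q t)) : ℝ)) = V (q 1) - V (q 0) := by
  have hderiv : ∀ t, HasDerivAt (fun s => V (q s)) (inner ℝ (deriv q t) (gradV (q t)) : ℝ) t := by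
    intro t
    have hqd : HasDerivAt q (deriv q t) t := ((hq.differentiable one_ne_zero) t).hasDerivAt
    have := (hgrad (q t)).comp_hasDerivAt t hqd
    simpa [real_inner_comm, Function.comp_def] using this
  have hcont : Continuous (fun t => (inner ℝ (deriv q t) (gradV (q t)) : ℝ)) :=
    (hq.continuous_deriv le_rfl).inner (hgc.comp hq.continuous)
  exact intervalIntegral.integral_eq_sub_of_hasDerivAt (fun t _ => hderiv t)
    (hcont.intervalIntegrable 0 1)

lemma stmt3_key (V : E → ℝ)
    (gradV : E → E) (hgrad : ∀ x, HasFDerivAt V (innerSL ℝ (gradV x)) x)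
    (hgc : Continuous gradV)
    (q : ℝ → E) (hq : ContDiff ℝ 1 q) (sgn : ℝ) (hsgn : sgn = 1 ∨ sgn = -1) :
    (∫ t in (0:ℝ)..1, (1/2) * ‖deriv q t + sgn • gradV (q t)‖^2)
      = (∫ t in (0:ℝ)..1, ((1/2) * ‖deriv q t‖^2 + (1/2) * ‖gradV (q t)‖^2))
        + sgn * (V (q 1) - V (q 0)) := by
  have hc1 : Continuous (deriv q) := hq.continuous_deriv le_rfl
  have hc2 : Continuous (fun t => gradV (q t)) := hgc.comp hq.continuous
  have hpt : ∀ t : ℝ, (1/2) * ‖deriv q t + sgn • gradV (q t)‖^2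
      = ((1/2) * ‖deriv q t‖^2 + (1/2) * ‖gradV (q t)‖^2)
        + sgn * (inner ℝ (deriv q t) (gradV (q t)) : ℝ) := by
    intro t
    have := @norm_add_sq_real E _ _ (deriv q t) (sgn • gradV (q t))
    rw [this, norm_smul, real_inner_smul_right]
    have hs2 : |sgn| = 1 := by rcases hsgn with h | h <;> simp [h]
    simp only [Real.norm_eq_abs, hs2]
    ring
  have hI1 : IntervalIntegrable
      (fun t => ((1/2) * ‖deriv q t‖^2 + (1/2) * ‖gradV (q t)‖^2)) MeasureTheory.volume 0 1 := by
    apply Continuous.intervalIntegrable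
    continuity
  have hI2 : IntervalIntegrable
      (fun t => sgn * (inner ℝ (deriv q t) (gradV (q t)) : ℝ)) MeasureTheory.volume 0 1 := by
    apply Continuous.intervalIntegrable
    exact continuous_const.mul (hc1.inner hc2)
  calc (∫ t in (0:ℝ)..1, (1/2) * ‖deriv q t + sgn • gradV (q t)‖^2)
      = ∫ t in (0:ℝ)..1, (((1/2) * ‖deriv q t‖^2 + (1/2) * ‖gradV (q t)‖^2)
          + sgn * (inner ℝ (deriv q t) (gradV (q t)) : ℝ)) := by
        apply intervalIntegral.integral_congr; intro t _; exact hpt t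
    _ = (∫ t in (0:ℝ)..1, ((1/2) * ‖deriv q t‖^2 + (1/2) * ‖gradV (q t)‖^2))
          + ∫ t in (0:ℝ)..1, sgn * (inner ℝ (deriv q t) (gradV (q t)) : ℝ) :=
        intervalIntegral.integral_add hI1 hI2
    _ = _ := by
        rw [intervalIntegral.integral_const_mul,
          stmt3_inner_integral V gradV hgrad hgc q hq]

lemma stmt3_sInf_add {S : Set ℝ} (hne : S.Nonempty) (hbd : BddBelow S) (c : ℝ) :
    sInf ((fun x => x + c) '' S) = sInf S + c := by
  exact ((Monotone.map_csInf_of_continuousAt (continuousAt_id.add continuousAt_const)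
    (fun a b hab => by simpa using add_le_add_right hab c) hne hbd)).symm

end Aux

/-- Over C¹ paths from `y` to `z`,
`inf A_oc = inf A_m + (V z − V y)`, `inf A_oc* = inf A_m − (V z − V y)`, and
`inf A_oc − inf A_oc* = 2 (V z − V y)`. -/
theorem stmt3 {E : Type*} [NormedAddCommGroup E] [InnerProductSpace ℝ E]
    (V : E → ℝ) (hV : ContDiff ℝ 1 V)
    (gradV : E → E) (hgrad : ∀ x, HasFDerivAt V (innerSL ℝ (gradV x)) x)
    (y z : E) :
    sInf {r : ℝ | ∃ q : ℝ → E, ContDiff ℝ 1 q ∧ q 0 = y ∧ q 1 = z ∧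
        r = ∫ t in (0:ℝ)..1, (1/2) * ‖deriv q t + gradV (q t)‖^2}
      = sInf {r : ℝ | ∃ q : ℝ → E, ContDiff ℝ 1 q ∧ q 0 = y ∧ q 1 = z ∧
        r = ∫ t in (0:ℝ)..1, ((1/2) * ‖deriv q t‖^2 + (1/2) * ‖gradV (q t)‖^2)}
        + (V z - V y)
    ∧ sInf {r : ℝ | ∃ q : ℝ → E, ContDiff ℝ 1 q ∧ q 0 = y ∧ q 1 = z ∧
        r = ∫ t in (0:ℝ)..1, (1/2) * ‖deriv q t - gradV (q t)‖^2}
      = sInf {r : ℝ | ∃ q : ℝ → E, ContDiff ℝ 1 q ∧ q 0 = y ∧ q 1 = z ∧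
        r = ∫ t in (0:ℝ)..1, ((1/2) * ‖deriv q t‖^2 + (1/2) * ‖gradV (q t)‖^2)}
        - (V z - V y)
    ∧ sInf {r : ℝ | ∃ q : ℝ → E, ContDiff ℝ 1 q ∧ q 0 = y ∧ q 1 = z ∧
        r = ∫ t in (0:ℝ)..1, (1/2) * ‖deriv q t + gradV (q t)‖^2}
      - sInf {r : ℝ | ∃ q : ℝ → E, ContDiff ℝ 1 q ∧ q 0 = y ∧ q 1 = z ∧
        r = ∫ t in (0:ℝ)..1, (1/2) * ‖deriv q t - gradV (q t)‖^2}
      = 2 * (V z - V y) := by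
  have hgc : Continuous gradV := stmt3_grad_cont V hV gradV hgrad
  set c : ℝ := V z - V y with hc
  set Sm : Set ℝ := {r : ℝ | ∃ q : ℝ → E, ContDiff ℝ 1 q ∧ q 0 = y ∧ q 1 = z ∧
        r = ∫ t in (0:ℝ)..1, ((1/2) * ‖deriv q t‖^2 + (1/2) * ‖gradV (q t)‖^2)} with hSm
  -- key identities for a fixed path
  have keyp : ∀ q : ℝ → E, ContDiff ℝ 1 q → q 0 = y → q 1 = z →
      (∫ t in (0:ℝ)..1, (1/2) * ‖deriv q t + gradV (q t)‖^2)
        = (∫ t in (0:ℝ)..1, ((1/2) * ‖deriv q t‖^2 + (1/2) * ‖gradV (q t)‖^2)) + c := by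
    intro q hq h0 h1
    have := stmt3_key V gradV hgrad hgc q hq 1 (Or.inl rfl)
    simpa [one_smul, h0, h1, hc] using this
  have keym : ∀ q : ℝ → E, ContDiff ℝ 1 q → q 0 = y → q 1 = z →
      (∫ t in (0:ℝ)..1, (1/2) * ‖deriv q t - gradV (q t)‖^2)
        = (∫ t in (0:ℝ)..1, ((1/2) * ‖deriv q t‖^2 + (1/2) * ‖gradV (q t)‖^2)) + (-c) := by
    intro q hq h0 h1
    have := stmt3_key V gradV hgrad hgc q hq (-1) (Or.inr rfl)
    simp only [neg_smul, one_smul, ← sub_eq_add_neg] at this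
    rw [this, h0, h1, hc]; ring
  -- set identities
  have hsetp : {r : ℝ | ∃ q : ℝ → E, ContDiff ℝ 1 q ∧ q 0 = y ∧ q 1 = z ∧
        r = ∫ t in (0:ℝ)..1, (1/2) * ‖deriv q t + gradV (q t)‖^2}
      = (fun x => x + c) '' Sm := by
    ext r
    constructor
    · rintro ⟨q, hq, h0, h1, rfl⟩
      exact ⟨_, ⟨q, hq, h0, h1, rfl⟩, (keyp q hq h0 h1).symm⟩
    · rintro ⟨x, ⟨q, hq, h0, h1, rfl⟩, rfl⟩
      exact ⟨q, hq, h0, h1, (keyp q hq h0 h1).symm⟩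
  have hsetm : {r : ℝ | ∃ q : ℝ → E, ContDiff ℝ 1 q ∧ q 0 = y ∧ q 1 = z ∧
        r = ∫ t in (0:ℝ)..1, (1/2) * ‖deriv q t - gradV (q t)‖^2}
      = (fun x => x + (-c)) '' Sm := by
    ext r
    constructor
    · rintro ⟨q, hq, h0, h1, rfl⟩
      exact ⟨_, ⟨q, hq, h0, h1, rfl⟩, (keym q hq h0 h1).symm⟩
    · rintro ⟨x, ⟨q, hq, h0, h1, rfl⟩, rfl⟩
      exact ⟨q, hq, h0, h1, (keym q hq h0 h1).symm⟩
  -- nonempty and bounded below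
  have hne : Sm.Nonempty := by
    refine ⟨_, fun t => y + t • (z - y), ?_, by simp, by simp, rfl⟩
    exact contDiff_const.add (contDiff_id.smul contDiff_const)
  have hbd : BddBelow Sm := by
    refine ⟨0, ?_⟩
    rintro r ⟨q, hq, h0, h1, rfl⟩
    apply intervalIntegral.integral_nonneg zero_le_one
    intro t _
    positivity
  have hp := stmt3_sInf_add hne hbd c
  have hm := stmt3_sInf_add hne hbd (-c)
  rw [hsetp, hsetm, hp, hm]
  refine ⟨rfl, by ring, by ring⟩
end

section
/- (Geometric Hopf–Cole, forward part.) Let n ≥ 1, let G : ℝⁿ → Matrix (Fin n) (Fin n) ℝ be a C¹ map with G(x) symmetric for all x, and let V : ℝⁿ → ℝ be C². Assume: (A1) there are real constants c(i,j,k) such that ∂ᵢG^{jk}(x) = c(i,j,k) for all x and all i,j,k; (A2) there are real constants d(i,k) such that ∂ᵢ(Σⱼ G^{jk} ∂ⱼV)(x) = d(i,k) for all x and all i,k; and the Hessian matrix (∂²ᵢⱼV(x))ᵢⱼ is injective (as a linear map ℝⁿ → ℝⁿ) at every x. Let φ : ℝ → ℝⁿ be differentiable and satisfy φ'ᵢ(t)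 + (1/2) Σ_{j,k} c(i,j,k) φⱼ(t) φₖ(t) = Σₖ d(i,k) φₖ(t) for all i and t, and let η : ℝ → ℝⁿ be differentiable with 2 ∂ᵢV(η(t)) = φᵢ(t) for all i and t. Then η is a gradient flow of V: η'ʲ(t) = Σₖ G^{jk}(η(t)) ∂ₖV(η(t)) for all j and t. -/
/-- Partial derivative of `F : ℝⁿ → ℝ` in the `i`-th coordinate direction. -/
noncomputable def pd {n : ℕ} (F : (Fin n → ℝ) → ℝ) (i : Fin n) (x : Fin n → ℝ) : ℝ :=
  fderiv ℝ F x (Pi.single i 1)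

lemma fderiv_apply_eq_sum_pd {n : ℕ} {F : (Fin n → ℝ) → ℝ} {x : Fin n → ℝ}
    (u : Fin n → ℝ) :
    fderiv ℝ F x u = ∑ j, u j * pd F j x := by
  have hu : u = ∑ j, u j • (Pi.single j (1:ℝ) : Fin n → ℝ) := by
    ext k
    simp [Pi.single_apply]
  conv_lhs => rw [hu]
  rw [map_sum]
  simp [pd, smul_eq_mul]

lemma pd_contDiff {n : ℕ} {V : (Fin n → ℝ) → ℝ} (hV : ContDiff ℝ 2 V) (i : Fin n) :
    ContDiff ℝ 1 (pd V i) :=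
  (hV.fderiv_right (by norm_num : (1:WithTop ℕ∞)+1 ≤ 2)).clm_apply contDiff_const

lemma pd_symm {n : ℕ} {V : (Fin n → ℝ) → ℝ} (hV : ContDiff ℝ 2 V) (i j : Fin n)
    (x : Fin n → ℝ) : pd (pd V j) i x = pd (pd V i) j x := by
  have hd : DifferentiableAt ℝ (fderiv ℝ V) x :=
    ((hV.fderiv_right (by norm_num : (1:WithTop ℕ∞)+1 ≤ 2)).differentiable one_ne_zero) x
  have key : ∀ a b : Fin n, pd (pd V b) a x
      = fderiv ℝ (fderiv ℝ V) x (Pi.single a 1) (Pi.single b 1) := by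
    intro a b
    have : pd V b = fun y => (fderiv ℝ V y) (Pi.single b 1) := rfl
    rw [pd, this, fderiv_clm_apply hd (differentiableAt_const _)]
    simp
  rw [key, key]
  exact (hV.contDiffAt.isSymmSndFDerivAt (by norm_num)) _ _

lemma pd_sum_mul {n : ℕ} {G : (Fin n → ℝ) → Fin n → Fin n → ℝ}
    (hG : ∀ j k, ContDiff ℝ 1 (fun x => G x j k))
    {V : (Fin n → ℝ) → ℝ} (hV : ContDiff ℝ 2 V) (i k : Fin n) (x : Fin n → ℝ) :
    pd (fun y => ∑ j, G y j k * pd V j y) i x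
      = ∑ j, (pd (fun y => G y j k) i x * pd V j x + G x j k * pd (pd V j) i x) := by
  have hW : HasFDerivAt (fun y => ∑ j, G y j k * pd V j y)
      (∑ j, (G x j k • fderiv ℝ (pd V j) x + pd V j x • fderiv ℝ (fun y => G y j k) x)) x := by
    apply HasFDerivAt.fun_sum
    intro j _
    exact ((((hG j k).differentiable one_ne_zero) x).hasFDerivAt).mul
      ((((pd_contDiff hV j).differentiable one_ne_zero) x).hasFDerivAt)
  rw [pd, hW.fderiv]
  simp only [ContinuousLinearMap.sum_apply, ContinuousLinearMap.add_apply,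
    ContinuousLinearMap.smul_apply, smul_eq_mul]
  refine Finset.sum_congr rfl fun j _ => ?_
  simp only [pd]
  ring

/-- Geometric Hopf–Cole, forward part: under assumptions (A1),
(A2) and injectivity of the Hessian of `V`, if `φ` solves the coordinate
Euler–Lagrange (HJB-type) equation and `η` satisfies `2 ∂ᵢV(η) = φᵢ`, then `η`
is a gradient flow of `V`: `η'ʲ = Σₖ G^{jk}(η) ∂ₖV(η)`. -/
theorem stmt4 {n : ℕ} (hn : 1 ≤ n)
    (G : (Fin n → ℝ) → Fin n → Fin n → ℝ)
    (hG : ∀ j k, ContDiff ℝ 1 (fun x => G x j k))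
    (hGsymm : ∀ x j k, G x j k = G x k j)
    (V : (Fin n → ℝ) → ℝ) (hV : ContDiff ℝ 2 V)
    (c : Fin n → Fin n → Fin n → ℝ)
    (hA1 : ∀ i j k x, pd (fun y => G y j k) i x = c i j k)
    (dm : Fin n → Fin n → ℝ)
    (hA2 : ∀ i k x, pd (fun y => ∑ j, G y j k * pd V j y) i x = dm i k)
    (hHess : ∀ x, Function.Injective
      (fun u : Fin n → ℝ => fun i => ∑ j, pd (fun y => pd V j y) i x * u j))
    (φ dφ : ℝ → Fin n → ℝ)
    (hφ : ∀ i t, HasDerivAt (fun s => φ s i) (dφ t i) t)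
    (hode : ∀ i t, dφ t i + (1/2) * ∑ j, ∑ k, c i j k * φ t j * φ t k
      = ∑ k, dm i k * φ t k)
    (η dη : ℝ → Fin n → ℝ)
    (hη : ∀ j t, HasDerivAt (fun s => η s j) (dη t j) t)
    (hHC : ∀ i t, 2 * pd V i (η t) = φ t i) :
    ∀ j t, dη t j = ∑ k, G (η t) j k * pd V k (η t) := by
  intro j0 t
  set x := η t with hxdef
  set a : Fin n → ℝ := fun k => pd V k x with hadef
  set B : Fin n → Fin n → ℝ := fun i j => pd (pd V j) i x with hBdef
  -- chain rule and identification of dφ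
  have hηd : HasDerivAt η (dη t) t := hasDerivAt_pi.2 (fun j => hη j t)
  have hdφ : ∀ i, dφ t i = 2 * ∑ j, dη t j * B i j := by
    intro i
    have hdiff : DifferentiableAt ℝ (pd V i) x :=
      ((pd_contDiff hV i).differentiable one_ne_zero) _
    have hch : HasDerivAt (fun s => pd V i (η s)) (∑ j, dη t j * B i j) t := by
      have h := (hdiff.hasFDerivAt).comp_hasDerivAt t hηd
      rw [fderiv_apply_eq_sum_pd] at h
      have he : ∑ j, dη t j * pd (pd V i) j x = ∑ j, dη t j * B i j :=
        Finset.sum_congr rfl fun j _ => by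
          rw [show B i j = pd (pd V i) j x from pd_symm hV i j x]
      rwa [he] at h
    have h2 : HasDerivAt (fun s => φ s i) (2 * ∑ j, dη t j * B i j) t := by
      have h3 := hch.const_mul 2
      have : (fun s => 2 * pd V i (η s)) = fun s => φ s i := funext fun s => hHC i s
      rwa [this] at h3
    exact (hφ i t).unique h2
  -- expansion of dm
  have hdm : ∀ i k, dm i k = ∑ j, (c i j k * a j + G x j k * B i j) := by
    intro i k
    rw [← hA2 i k x, pd_sum_mul hG hV]
    exact Finset.sum_congr rfl fun j _ => by rw [hA1]
  have hφa : ∀ m, φ t m = 2 * a m := fun m => (hHC m t).symm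
  -- key algebraic identity
  have key : ∀ i, ∑ j, B i j * (dη t j - ∑ k, G x j k * a k) = 0 := by
    intro i
    have h0 := hode i t
    rw [hdφ i] at h0
    have hL2 : (1/2) * (∑ j, ∑ k, c i j k * φ t j * φ t k)
        = 2 * ∑ j, ∑ k, c i j k * a j * a k := by
      have h4 : ∀ j, ∑ k, c i j k * φ t j * φ t k = 4 * ∑ k, c i j k * a j * a k := by
        intro j
        rw [Finset.mul_sum]
        exact Finset.sum_congr rfl fun k _ => by rw [hφa j, hφa k]; ring
      rw [Finset.sum_congr rfl (fun j _ => h4 j), ← Finset.mul_sum]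
      ring
    have hR : ∑ k, dm i k * φ t k
        = 2 * (∑ j, ∑ k, c i j k * a j * a k) + 2 * ∑ j, B i j * ∑ k, G x j k * a k := by
      have h5 : ∀ k, dm i k * φ t k
          = ∑ j, (2 * (c i j k * a j * a k) + 2 * (B i j * (G x j k * a k))) := by
        intro k
        rw [hdm i k, hφa k, Finset.sum_mul]
        exact Finset.sum_congr rfl fun j _ => by ring
      rw [Finset.sum_congr rfl (fun k _ => h5 k)]
      rw [Finset.sum_comm]
      simp only [Finset.sum_add_distrib, ← Finset.mul_sum]
    rw [hL2, hR] at h0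
    have h6 : ∑ j, dη t j * B i j = ∑ j, B i j * ∑ k, G x j k * a k := by linarith
    have h7 : ∑ j, B i j * (dη t j - ∑ k, G x j k * a k)
        = (∑ j, dη t j * B i j) - ∑ j, B i j * ∑ k, G x j k * a k := by
      rw [← Finset.sum_sub_distrib]
      exact Finset.sum_congr rfl fun j _ => by ring
    rw [h7, h6, sub_self]
  -- conclude by injectivity of the Hessian
  have hu : (fun j => dη t j - ∑ k, G x j k * a k) = (0 : Fin n → ℝ) := by
    apply hHess x
    funext i
    simp only [mul_zero, Finset.sum_const_zero]
    calc ∑ j, pd (fun y => pd V j y) i x * (dη t j - ∑ k, G x j k * a k)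
        = ∑ j, B i j * (dη t j - ∑ k, G x j k * a k) := rfl
      _ = 0 := key i
      _ = ∑ j, pd (fun y => pd V j y) i x * (0 : ℝ) := by simp
  have := congrFun hu j0
  simp only [Pi.zero_apply, sub_eq_zero] at this
  exact this
end

section
/- (Geometric Hopf–Cole, backward part.) Let n ≥ 1, let G : ℝⁿ → Matrix (Fin n) (Fin n) ℝ be a C¹ map with G(x) symmetric for all x, and let V : ℝⁿ → ℝ be C². Assume: (A1) there are real constants c(i,j,k) such that ∂ᵢG^{jk}(x) = c(i,j,k) for all x; (A2) there are real constants d(i,k) such that ∂ᵢ(Σⱼ G^{jk} ∂ⱼV)(x) = d(i,k) for all x; and the Hessian matrix (∂²ᵢⱼV(x))ᵢⱼ is injective at every x. Let φ* : ℝ → ℝⁿ be differentiable and satisfy φ*'ᵢ(t) + (1/2) Σ_{j,k} c(i,j,k) φ*ⱼ(t) φ*ₖ(t) = − Σₖ d(i,k) φ*ₖ(t) for all i and t, and let η* : ℝ → ℝⁿ be differentiable with 2 ∂ᵢV(η*(t)) = −φ*ᵢ(t) for all i and t. Then η* is a backward gradient flow of V: η*'ʲ(t) = − Σₖ G^{jk}(η*(t))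 ∂ₖV(η*(t)) for all j and t. -/
/-- Evaluating a continuous linear functional on `ℝⁿ` via the standard basis. -/
lemma clm_eval_sum {n : ℕ} (L : (Fin n → ℝ) →L[ℝ] ℝ) (v : Fin n → ℝ) :
    L v = ∑ j, v j * L (Pi.single j 1) := by
  have hv : (∑ j, v j • (Pi.single j 1 : Fin n → ℝ)) = v := by
    ext k
    simp [Pi.single_apply]
  calc L v = L (∑ j, v j • (Pi.single j 1 : Fin n → ℝ)) := by rw [hv]
    _ = ∑ j, v j * L (Pi.single j 1) := by
        rw [map_sum]
        simp [smul_eq_mul]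

/-- Geometric Hopf–Cole, backward part: under assumptions (A1),
(A2) and injectivity of the Hessian of `V`, if `φ*` solves the sign-reversed
coordinate Euler–Lagrange equation and `η*` satisfies `2 ∂ᵢV(η*) = −φ*ᵢ`, then
`η*` is a backward gradient flow of `V`: `η*'ʲ = −Σₖ G^{jk}(η*) ∂ₖV(η*)`. -/
theorem stmt5 {n : ℕ} (hn : 1 ≤ n)
    (G : (Fin n → ℝ) → Fin n → Fin n → ℝ)
    (hG : ∀ j k, ContDiff ℝ 1 (fun x => G x j k))
    (hGsymm : ∀ x j k, G x j k = G x k j)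
    (V : (Fin n → ℝ) → ℝ) (hV : ContDiff ℝ 2 V)
    (c : Fin n → Fin n → Fin n → ℝ)
    (hA1 : ∀ i j k x, pd (fun y => G y j k) i x = c i j k)
    (dm : Fin n → Fin n → ℝ)
    (hA2 : ∀ i k x, pd (fun y => ∑ j, G y j k * pd V j y) i x = dm i k)
    (hHess : ∀ x, Function.Injective
      (fun u : Fin n → ℝ => fun i => ∑ j, pd (fun y => pd V j y) i x * u j))
    (φs dφs : ℝ → Fin n → ℝ)
    (hφs : ∀ i t, HasDerivAt (fun s => φs s i) (dφs t i) t)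
    (hode : ∀ i t, dφs t i + (1/2) * ∑ j, ∑ k, c i j k * φs t j * φs t k
      = -∑ k, dm i k * φs t k)
    (ηs dηs : ℝ → Fin n → ℝ)
    (hηs : ∀ j t, HasDerivAt (fun s => ηs s j) (dηs t j) t)
    (hHC : ∀ i t, 2 * pd V i (ηs t) = -φs t i) :
    ∀ j t, dηs t j = -∑ k, G (ηs t) j k * pd V k (ηs t) := by
  intro j₀ t
  -- derivative data for V
  have hVd : Differentiable ℝ V := hV.differentiable (by norm_num)
  have hf'c : ContDiff ℝ 1 (fderiv ℝ V) := hV.fderiv_right (by norm_num)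
  have hf'd : Differentiable ℝ (fderiv ℝ V) := hf'c.differentiable one_ne_zero
  have hf''sym : ∀ z : Fin n → ℝ, ∀ v w,
      fderiv ℝ (fderiv ℝ V) z v w = fderiv ℝ (fderiv ℝ V) z w v := fun z v w =>
    second_derivative_symmetric (fun y => (hVd y).hasFDerivAt)
      (hf'd z).hasFDerivAt v w
  -- derivative of the partials of V
  have hpdVj : ∀ (z : Fin n → ℝ) (j : Fin n), HasFDerivAt (fun y => pd V j y)
      ((fderiv ℝ (fderiv ℝ V) z).flip (Pi.single j 1)) z := by
    intro z j
    have h := (hf'd z).hasFDerivAt.clm_apply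
      (hasFDerivAt_const ((Pi.single j 1 : Fin n → ℝ)) z)
    simp only [pd]
    simpa using h
  -- Hessian entries
  have hHij : ∀ (z : Fin n → ℝ) (i j : Fin n), pd (fun y => pd V j y) i z
      = fderiv ℝ (fderiv ℝ V) z (Pi.single i 1) (Pi.single j 1) := by
    intro z i j
    rw [pd, (hpdVj z j).fderiv]
    rfl
  set x := ηs t with hxdef
  -- expansion of dm
  have hdm : ∀ i k, dm i k = ∑ j, (c i j k * pd V j x
      + G x j k * fderiv ℝ (fderiv ℝ V) x (Pi.single i 1) (Pi.single j 1)) := by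
    intro i k
    have hGfd : ∀ j : Fin n, HasFDerivAt (fun y => G y j k)
        (fderiv ℝ (fun y => G y j k) x) x :=
      fun j => ((hG j k).differentiable one_ne_zero x).hasFDerivAt
    have hsum : HasFDerivAt (fun y => ∑ j, G y j k * pd V j y)
        (∑ j, (G x j k • ((fderiv ℝ (fderiv ℝ V) x).flip (Pi.single j 1))
          + pd V j x • fderiv ℝ (fun y => G y j k) x)) x :=
      HasFDerivAt.fun_sum (fun j _ => (hGfd j).mul (hpdVj x j))
    rw [← hA2 i k x, pd, hsum.fderiv]
    rw [ContinuousLinearMap.sum_apply]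
    refine Finset.sum_congr rfl fun j _ => ?_
    have hc : fderiv ℝ (fun y => G y j k) x (Pi.single i 1) = c i j k := hA1 i j k x
    simp only [ContinuousLinearMap.add_apply, ContinuousLinearMap.smul_apply,
      ContinuousLinearMap.flip_apply, smul_eq_mul, hc]
    rw [hf''sym x (Pi.single i 1) (Pi.single j 1)]
    ring
  -- derivative of s ↦ ∂ᵢV(ηs s)
  have hηt : HasDerivAt ηs (dηs t) t := hasDerivAt_pi.2 (fun j => hηs j t)
  have hcomp : ∀ i : Fin n, HasDerivAt (fun s => pd V i (ηs s))
      (∑ j, dηs t j * fderiv ℝ (fderiv ℝ V) x (Pi.single i 1) (Pi.single j 1)) t := by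
    intro i
    have h := (hpdVj x i).comp_hasDerivAt t hηt
    have e : ((fderiv ℝ (fderiv ℝ V) x).flip (Pi.single i 1)) (dηs t)
        = ∑ j, dηs t j * fderiv ℝ (fderiv ℝ V) x (Pi.single i 1) (Pi.single j 1) := by
      rw [clm_eval_sum]
      refine Finset.sum_congr rfl fun j _ => ?_
      rw [ContinuousLinearMap.flip_apply,
        hf''sym x (Pi.single j 1) (Pi.single i 1)]
    rwa [e] at h
  -- key identity from Hopf–Cole relation
  have hkey : ∀ i : Fin n, 2 * (∑ j, dηs t j
      * fderiv ℝ (fderiv ℝ V) x (Pi.single i 1) (Pi.single j 1)) = -(dφs t i) := by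
    intro i
    have h1 := (hcomp i).const_mul 2
    have h2 : HasDerivAt (fun s => 2 * pd V i (ηs s)) (-(dφs t i)) t := by
      have h : HasDerivAt (fun s => -φs s i) (-(dφs t i)) t := (hφs i t).neg
      have hfun : (fun s => -φs s i) = fun s => 2 * pd V i (ηs s) :=
        funext fun s => (hHC i s).symm
      rwa [hfun] at h
    exact h1.unique h2
  -- value of φ at time t
  have hφval : ∀ k, φs t k = -(2 * pd V k x) := by
    intro k
    have h := hHC k t
    rw [← hxdef] at h
    linarith
  -- expansion of dφ
  have hdφ : ∀ i, dφs t i = 2 * ∑ j,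
      fderiv ℝ (fderiv ℝ V) x (Pi.single i 1) (Pi.single j 1)
        * (∑ k, G x j k * pd V k x) := by
    intro i
    have hS1 : ∑ j, ∑ k, c i j k * φs t j * φs t k
        = 4 * ∑ j, ∑ k, c i j k * pd V j x * pd V k x := by
      rw [Finset.mul_sum]
      refine Finset.sum_congr rfl fun j _ => ?_
      rw [Finset.mul_sum]
      refine Finset.sum_congr rfl fun k _ => ?_
      rw [hφval j, hφval k]; ring
    have hS2 : ∑ k, dm i k * φs t k = -(2 * ∑ k, dm i k * pd V k x) := by
      rw [Finset.mul_sum, ← Finset.sum_neg_distrib]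
      refine Finset.sum_congr rfl fun k _ => ?_
      rw [hφval k]; ring
    have hS3 : ∑ k, dm i k * pd V k x
        = (∑ j, ∑ k, c i j k * pd V j x * pd V k x)
          + ∑ j, fderiv ℝ (fderiv ℝ V) x (Pi.single i 1) (Pi.single j 1)
              * (∑ k, G x j k * pd V k x) := by
      calc ∑ k, dm i k * pd V k x
          = ∑ k, ∑ j, (c i j k * pd V j x * pd V k x
              + G x j k * fderiv ℝ (fderiv ℝ V) x (Pi.single i 1) (Pi.single j 1)
                * pd V k x) := by
            refine Finset.sum_congr rfl fun k _ => ?_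
            rw [hdm i k, Finset.sum_mul]
            refine Finset.sum_congr rfl fun j _ => ?_
            ring
        _ = ∑ j, ∑ k, (c i j k * pd V j x * pd V k x
              + G x j k * fderiv ℝ (fderiv ℝ V) x (Pi.single i 1) (Pi.single j 1)
                * pd V k x) := Finset.sum_comm
        _ = _ := by
            rw [← Finset.sum_add_distrib]
            refine Finset.sum_congr rfl fun j _ => ?_
            rw [Finset.sum_add_distrib]
            congr 1
            rw [Finset.mul_sum]
            exact Finset.sum_congr rfl fun k _ => by ring
    have h := hode i t
    rw [hS1, hS2, hS3] at h
    linarith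
  -- main algebraic identity, then Hessian injectivity
  have hmain : (fun i => ∑ j, pd (fun y => pd V j y) i x * dηs t j)
      = (fun i => ∑ j, pd (fun y => pd V j y) i x
          * (fun j => -∑ k, G x j k * pd V k x) j) := by
    funext i
    simp only [hHij x]
    have h1 : ∑ j, fderiv ℝ (fderiv ℝ V) x (Pi.single i 1) (Pi.single j 1) * dηs t j
        = ∑ j, dηs t j * fderiv ℝ (fderiv ℝ V) x (Pi.single i 1) (Pi.single j 1) :=
      Finset.sum_congr rfl fun j _ => mul_comm _ _
    have h2 : ∑ j, fderiv ℝ (fderiv ℝ V) x (Pi.single i 1) (Pi.single j 1)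
          * (-∑ k, G x j k * pd V k x)
        = -∑ j, fderiv ℝ (fderiv ℝ V) x (Pi.single i 1) (Pi.single j 1)
          * (∑ k, G x j k * pd V k x) := by
      rw [← Finset.sum_neg_distrib]
      exact Finset.sum_congr rfl fun j _ => by ring
    rw [h1, h2]
    have hk := hkey i
    have hd := hdφ i
    linarith
  have huw : dηs t = fun j => -∑ k, G x j k * pd V k x := hHess x hmain
  exact congrFun huw j₀
end

section
/- (Coordinate form of the Euler–Lagrange equations of the optimal control problem.) Let n ≥ 1, let g : ℝⁿ → Matrix (Fin n) (Fin n) ℝ be a C² map such that g(x) is symmetric and invertible for every x, let G(x) := g(x)⁻¹, define the Christoffel symbols Γ^k_{ij}(x) := (1/2) Σₗ G^{kℓ}(x) (∂ᵢ g_{jℓ}(x) + ∂ⱼ g_{iℓ}(x) − ∂ₗ g_{ij}(x)) and W^k(x) := Σₗ G^{kℓ}(x) ∂ₗV(x), where V : ℝⁿ → ℝ is C². Suppose q, b : ℝ → ℝⁿ are differentiable and satisfy, for all t: q'ʲ(t) = bʲ(t) − Wʲ(q(t)) and b'ᵏ(t) + Σ_{i,j} Γ^k_{ij}(q(t)) q'ⁱ(t)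 bʲ(t) = Σᵢ bⁱ(t) ∂ᵢWᵏ(q(t)) + Σ_{i,j} Γ^k_{ij}(q(t)) bⁱ(t) Wʲ(q(t)). Then the covector φᵢ(t) := Σⱼ g_{ij}(q(t)) bʲ(t) satisfies φ'ᵢ(t) + (1/2) Σ_{j,k} ∂ᵢG^{jk}(q(t)) φⱼ(t) φₖ(t) = Σₖ ∂ᵢ(Σⱼ G^{jk} ∂ⱼV)(q(t)) φₖ(t) for all i and t. -/
/-- Inverse metric tensor `G = g⁻¹`. -/
noncomputable def Ginv {n : ℕ} (g : (Fin n → ℝ) → Matrix (Fin n) (Fin n) ℝ)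
    (x : Fin n → ℝ) : Matrix (Fin n) (Fin n) ℝ :=
  (g x)⁻¹

/-- Christoffel symbols of the second kind of the metric `g`:
`Γ^k_{ij} = (1/2) Σₗ G^{kℓ} (∂ᵢg_{jℓ} + ∂ⱼg_{iℓ} − ∂ₗg_{ij})`. -/
noncomputable def Gamma {n : ℕ} (g : (Fin n → ℝ) → Matrix (Fin n) (Fin n) ℝ)
    (k i j : Fin n) (x : Fin n → ℝ) : ℝ :=
  (1/2) * ∑ l, Ginv g x k l *
    (pd (fun y => g y j l) i x + pd (fun y => g y i l) j x - pd (fun y => g y i j) l x)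

/-- Components of the gradient vector field `∇V`: `W^k = Σₗ G^{kℓ} ∂ₗV`. -/
noncomputable def Wgrad {n : ℕ} (g : (Fin n → ℝ) → Matrix (Fin n) (Fin n) ℝ)
    (V : (Fin n → ℝ) → ℝ) (k : Fin n) (x : Fin n → ℝ) : ℝ :=
  ∑ l, Ginv g x k l * pd V l x

section helpers
variable {n : ℕ}

lemma pd_const (c : ℝ) (i : Fin n) (x : Fin n → ℝ) : pd (fun _ => c) i x = 0 := by
  simp [pd]

lemma pd_sum {ι : Type*} (s : Finset ι) (F : ι → (Fin n → ℝ) → ℝ) (i : Fin n) (x : Fin n → ℝ)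
    (h : ∀ j ∈ s, DifferentiableAt ℝ (F j) x) :
    pd (fun y => ∑ j ∈ s, F j y) i x = ∑ j ∈ s, pd (F j) i x := by
  unfold pd
  rw [fderiv_fun_sum h]
  simp

lemma pd_mul (F H : (Fin n → ℝ) → ℝ) (i : Fin n) (x : Fin n → ℝ)
    (hF : DifferentiableAt ℝ F x) (hH : DifferentiableAt ℝ H x) :
    pd (fun y => F y * H y) i x = pd F i x * H x + F x * pd H i x := by
  unfold pd
  rw [fderiv_fun_mul hF hH]
  simp [smul_eq_mul]
  ring

lemma hasDerivAt_pd_comp (F : (Fin n → ℝ) → ℝ) (q : ℝ → Fin n → ℝ) (dq : Fin n → ℝ) (t : ℝ)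
    (hF : DifferentiableAt ℝ F (q t)) (hq : ∀ j, HasDerivAt (fun s => q s j) (dq j) t) :
    HasDerivAt (fun s => F (q s)) (∑ l, pd F l (q t) * dq l) t := by
  have hq' : HasDerivAt q dq t := hasDerivAt_pi.2 hq
  have h : HasDerivAt (fun s => F (q s)) (fderiv ℝ F (q t) dq) t :=
    hF.hasFDerivAt.comp_hasDerivAt t hq'
  convert h using 1
  have hdq : dq = ∑ l, dq l • (Pi.single l 1 : Fin n → ℝ) := by
    funext j
    simp [Finset.sum_apply, Pi.single_apply]
  conv_rhs => rw [hdq]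
  rw [map_sum]
  simp [pd, mul_comm]

lemma contDiff_finprod {m : WithTop ℕ∞} {ι : Type*} (s : Finset ι) (f : ι → (Fin n → ℝ) → ℝ) :
    (∀ i ∈ s, ContDiff ℝ m (f i)) → ContDiff ℝ m (fun x => ∏ i ∈ s, f i x) := by
  classical
  induction s using Finset.induction_on with
  | empty => intro _; simpa using contDiff_const
  | insert a s hne ih =>
      intro h
      simp only [Finset.prod_insert hne]
      exact (h a (Finset.mem_insert_self _ _)).mul (ih fun i hi => h i (Finset.mem_insert_of_mem hi))

lemma contDiff_det (M : (Fin n → ℝ) → Matrix (Fin n) (Fin n) ℝ)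
    (h : ∀ i j, ContDiff ℝ 2 fun x => M x i j) : ContDiff ℝ 2 (fun x => (M x).det) := by
  have he : (fun x => (M x).det)
      = fun x => ∑ σ : Equiv.Perm (Fin n), ((Equiv.Perm.sign σ : ℤ) : ℝ) * ∏ i, M x (σ i) i := by
    funext x
    rw [Matrix.det_apply']
  rw [he]
  exact ContDiff.sum fun σ _ => contDiff_const.mul (contDiff_finprod _ _ fun i _ => h (σ i) i)

lemma contDiff_ginv (g : (Fin n → ℝ) → Matrix (Fin n) (Fin n) ℝ)
    (hg : ∀ i j, ContDiff ℝ 2 fun x => g x i j) (hginv : ∀ x, IsUnit (g x).det)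
    (j k : Fin n) : ContDiff ℝ 2 (fun x => Ginv g x j k) := by
  have hdet : ContDiff ℝ 2 (fun x => (g x).det) := contDiff_det g hg
  have hadj : ContDiff ℝ 2 (fun x => (g x).adjugate j k) := by
    have he : (fun x => (g x).adjugate j k) = fun x => ((g x).updateRow k (Pi.single j 1)).det := by
      funext x; rw [Matrix.adjugate_apply]
    rw [he]
    refine contDiff_det _ fun a c => ?_
    by_cases hak : a = k
    · subst hak
      simp only [Matrix.updateRow_apply, if_pos rfl]
      exact contDiff_const
    · simp only [Matrix.updateRow_apply, if_neg hak]
      exact hg a c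
  have he : (fun x => Ginv g x j k) = fun x => ((g x).det)⁻¹ * (g x).adjugate j k := by
    funext x
    rw [Ginv, Matrix.inv_def, Matrix.smul_apply, smul_eq_mul, Ring.inverse_eq_inv]
  rw [he]
  exact (hdet.inv fun x => (hginv x).ne_zero).mul hadj

lemma pd_comm {V : (Fin n → ℝ) → ℝ} (hV : ContDiff ℝ 2 V) (a m : Fin n) (x : Fin n → ℝ) :
    pd (fun y => pd V a y) m x = pd (fun y => pd V m y) a x := by
  have hcd : ContDiff ℝ 1 (fderiv ℝ V) := hV.fderiv_right (by norm_num)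
  have hd : DifferentiableAt ℝ (fderiv ℝ V) x := (hcd.differentiable one_ne_zero) x
  have key : ∀ v w : Fin n → ℝ,
      fderiv ℝ (fun y => fderiv ℝ V y v) x w = fderiv ℝ (fderiv ℝ V) x w v := by
    intro v w
    rw [fderiv_clm_apply hd (differentiableAt_const v)]
    simp
  have hsymm : IsSymmSndFDerivAt ℝ V x := hV.contDiffAt.isSymmSndFDerivAt (by simp [minSmoothness_of_isRCLikeNormedField])
  show fderiv ℝ (fun y => fderiv ℝ V y (Pi.single a 1)) x (Pi.single m 1)
      = fderiv ℝ (fun y => fderiv ℝ V y (Pi.single m 1)) x (Pi.single a 1)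
  rw [key, key, hsymm]

lemma sum2_symmetrize (u : Fin n → Fin n → ℝ) :
    (2:ℝ) * (∑ a, ∑ c, u a c) = ∑ a, ∑ c, (u a c + u c a) := by
  have h1 : ∑ a, ∑ c, (u a c + u c a) = (∑ a, ∑ c, u a c) + (∑ a, ∑ c, u c a) := by
    simp [Finset.sum_add_distrib]
  have h2 : (∑ a : Fin n, ∑ c, u c a) = ∑ a, ∑ c, u a c := Finset.sum_comm
  rw [h1, h2]; ring

lemma sum2_ext_symm {f h : Fin n → Fin n → ℝ}
    (key : ∀ a c, f a c + f c a = h a c + h c a) :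
    ∑ a, ∑ c, f a c = ∑ a, ∑ c, h a c := by
  have h1 := sum2_symmetrize f
  have h2 := sum2_symmetrize h
  have h3 : ∑ a, ∑ c, (f a c + f c a) = ∑ a, ∑ c, (h a c + h c a) :=
    Finset.sum_congr rfl fun a _ => Finset.sum_congr rfl fun c _ => key a c
  linarith

lemma sum_comm4 (f : Fin n → Fin n → Fin n → Fin n → ℝ) :
    ∑ j, ∑ k, ∑ a, ∑ c, f j k a c = ∑ a, ∑ c, ∑ j, ∑ k, f j k a c := by
  calc ∑ j, ∑ k, ∑ a, ∑ c, f j k a c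
      = ∑ j, ∑ a, ∑ k, ∑ c, f j k a c := Finset.sum_congr rfl fun j _ => Finset.sum_comm
    _ = ∑ a, ∑ j, ∑ k, ∑ c, f j k a c := Finset.sum_comm
    _ = ∑ a, ∑ j, ∑ c, ∑ k, f j k a c :=
        Finset.sum_congr rfl fun a _ => Finset.sum_congr rfl fun j _ => Finset.sum_comm
    _ = ∑ a, ∑ c, ∑ j, ∑ k, f j k a c := Finset.sum_congr rfl fun a _ => Finset.sum_comm

lemma swap_weight (Mv : Fin n → Fin n → ℝ) (u v : Fin n → ℝ) :
    ∑ k, u k * (∑ j, Mv k j * v j) = ∑ j, v j * (∑ k, Mv k j * u k) := by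
  calc ∑ k, u k * (∑ j, Mv k j * v j) = ∑ k, ∑ j, u k * (Mv k j * v j) :=
        Finset.sum_congr rfl fun k _ => Finset.mul_sum _ _ _
    _ = ∑ j, ∑ k, u k * (Mv k j * v j) := Finset.sum_comm
    _ = ∑ j, v j * (∑ k, Mv k j * u k) := Finset.sum_congr rfl fun j _ => by
        rw [Finset.mul_sum]; exact Finset.sum_congr rfl fun k _ => by ring

lemma push2 (M : Fin n → ℝ) (S : Fin n → Fin n → ℝ) (u : Fin n → ℝ) :
    ∑ j, M j * (∑ a, u a * S a j) = ∑ a, u a * (∑ j, M j * S a j) := by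
  calc ∑ j, M j * (∑ a, u a * S a j) = ∑ j, ∑ a, M j * (u a * S a j) :=
        Finset.sum_congr rfl fun j _ => Finset.mul_sum _ _ _
    _ = ∑ a, ∑ j, M j * (u a * S a j) := Finset.sum_comm
    _ = ∑ a, u a * (∑ j, M j * S a j) := Finset.sum_congr rfl fun a _ => by
        rw [Finset.mul_sum]; exact Finset.sum_congr rfl fun j _ => by ring

lemma push3 (M : Fin n → ℝ) (T : Fin n → Fin n → Fin n → ℝ) (u v : Fin n → ℝ) :
    ∑ j, M j * (∑ a, ∑ c, T j a c * u a * v c) = ∑ a, ∑ c, (∑ j, M j * T j a c) * u a * v c := by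
  calc ∑ j, M j * (∑ a, ∑ c, T j a c * u a * v c)
      = ∑ j, ∑ a, ∑ c, M j * (T j a c * u a * v c) := by
        refine Finset.sum_congr rfl fun j _ => ?_
        rw [Finset.mul_sum]
        exact Finset.sum_congr rfl fun a _ => Finset.mul_sum _ _ _
    _ = ∑ a, ∑ j, ∑ c, M j * (T j a c * u a * v c) := Finset.sum_comm
    _ = ∑ a, ∑ c, ∑ j, M j * (T j a c * u a * v c) :=
        Finset.sum_congr rfl fun a _ => Finset.sum_comm
    _ = ∑ a, ∑ c, (∑ j, M j * T j a c) * u a * v c := by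
        refine Finset.sum_congr rfl fun a _ => Finset.sum_congr rfl fun c _ => ?_
        rw [Finset.sum_mul, Finset.sum_mul]
        exact Finset.sum_congr rfl fun j _ => by ring

lemma double_factor (P Q φv : Fin n → ℝ) (Dc : ℝ) :
    ∑ j, ∑ k, P j * Dc * Q k * φv j * φv k = Dc * (∑ j, P j * φv j) * (∑ k, Q k * φv k) := by
  calc ∑ j, ∑ k, P j * Dc * Q k * φv j * φv k
      = ∑ j, (P j * φv j) * (Dc * ∑ k, Q k * φv k) := by
        refine Finset.sum_congr rfl fun j _ => ?_
        rw [Finset.mul_sum, Finset.mul_sum]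
        exact Finset.sum_congr rfl fun k _ => by ring
    _ = (∑ j, P j * φv j) * (Dc * ∑ k, Q k * φv k) := by rw [← Finset.sum_mul]
    _ = Dc * (∑ j, P j * φv j) * (∑ k, Q k * φv k) := by ring

lemma keyalg (D : Fin n → Fin n → Fin n → ℝ) (hD : ∀ d p q, D d p q = D d q p)
    (H : Fin n → Fin n → ℝ) (hH : ∀ p q, H p q = H q p)
    (B W : Fin n → ℝ) (i : Fin n) :
    (∑ j, (∑ l, D l i j * (B l - W l)) * B j)
    + ((∑ a, B a * (H i a - ∑ j, D a i j * W j))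
       + (∑ a, ∑ c, (1/2) * (D a c i + D c a i - D i a c) * B a * W c)
       - ∑ a, ∑ c, (1/2) * (D a c i + D c a i - D i a c) * (B a - W a) * B c)
    = (∑ l, B l * (H l i - ∑ j, D i l j * W j))
      + (1/2) * ∑ a, ∑ c, D i a c * B a * B c := by
  have e1 : (∑ a, B a * (H i a - ∑ j, D a i j * W j))
      = (∑ a, B a * H i a) - ∑ a, ∑ c, B a * (D a i c * W c) := by
    rw [← Finset.sum_sub_distrib]
    refine Finset.sum_congr rfl fun a _ => ?_
    rw [mul_sub, Finset.mul_sum]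
  have e2 : (∑ l, B l * (H l i - ∑ j, D i l j * W j))
      = (∑ a, B a * H i a) - ∑ a, ∑ c, B a * (D i a c * W c) := by
    rw [← Finset.sum_sub_distrib]
    refine Finset.sum_congr rfl fun a _ => ?_
    rw [mul_sub, Finset.mul_sum, hH i a]
  have e3 : (∑ j, (∑ l, D l i j * (B l - W l)) * B j)
      = ∑ a, ∑ c, D c i a * (B c - W c) * B a :=
    Finset.sum_congr rfl fun a _ => Finset.sum_mul _ _ _
  have e4 : (1/2) * (∑ a, ∑ c, D i a c * B a * B c)
      = ∑ a, ∑ c, (1/2) * (D i a c * B a * B c) := by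
    rw [Finset.mul_sum]
    exact Finset.sum_congr rfl fun a _ => Finset.mul_sum _ _ _
  rw [e1, e2, e3, e4]
  have main : ∑ a, ∑ c, (D c i a * (B c - W c) * B a - B a * (D a i c * W c)
        + (1/2) * (D a c i + D c a i - D i a c) * B a * W c
        - (1/2) * (D a c i + D c a i - D i a c) * (B a - W a) * B c)
      = ∑ a, ∑ c, ((1/2) * (D i a c * B a * B c) - B a * (D i a c * W c)) := by
    apply sum2_ext_symm
    intro a c
    simp only [hD a c i, hD c a i, hD i c a]
    ring
  simp only [Finset.sum_sub_distrib, Finset.sum_add_distrib] at main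
  linarith

end helpers

theorem stmt7 {n : ℕ} (hn : 1 ≤ n)
    (g : (Fin n → ℝ) → Matrix (Fin n) (Fin n) ℝ)
    (hg : ∀ i j, ContDiff ℝ 2 (fun x => g x i j))
    (hgsymm : ∀ x, (g x).IsSymm)
    (hginv : ∀ x, IsUnit (g x).det)
    (V : (Fin n → ℝ) → ℝ) (hV : ContDiff ℝ 2 V)
    (q dq b db : ℝ → Fin n → ℝ)
    (hq : ∀ j t, HasDerivAt (fun s => q s j) (dq t j) t)
    (hb : ∀ k t, HasDerivAt (fun s => b s k) (db t k) t)
    (hconstr : ∀ j t, dq t j = b t j - Wgrad g V j (q t))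
    (hEL : ∀ k t, db t k + ∑ i, ∑ j, Gamma g k i j (q t) * dq t i * b t j
      = (∑ i, b t i * pd (fun y => Wgrad g V k y) i (q t))
        + ∑ i, ∑ j, Gamma g k i j (q t) * b t i * Wgrad g V j (q t)) :
    ∀ i t, HasDerivAt (fun s => ∑ j, g (q s) i j * b s j)
      ((∑ k, pd (fun y => ∑ j, Ginv g y j k * pd V j y) i (q t)
          * (∑ j, g (q t) k j * b t j))
        - (1/2) * ∑ j, ∑ k, pd (fun y => Ginv g y j k) i (q t)
          * (∑ l, g (q t) j l * b t l) * (∑ l, g (q t) k l * b t l)) t := by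
  intro i t
  -- differentiability facts
  have hgd : ∀ a c, Differentiable ℝ (fun y => g y a c) :=
    fun a c => (hg a c).differentiable two_ne_zero
  have hGc : ∀ a c, ContDiff ℝ 2 (fun y => Ginv g y a c) :=
    fun a c => contDiff_ginv g hg hginv a c
  have hGd : ∀ a c, Differentiable ℝ (fun y => Ginv g y a c) :=
    fun a c => (hGc a c).differentiable two_ne_zero
  have hpdVc : ∀ l, ContDiff ℝ 1 (fun y => pd V l y) := fun l =>
    (hV.fderiv_right (by norm_num)).clm_apply contDiff_const
  have hpdVd : ∀ l, Differentiable ℝ (fun y => pd V l y) :=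
    fun l => (hpdVc l).differentiable one_ne_zero
  have hWd : ∀ k, Differentiable ℝ (fun y => Wgrad g V k y) := by
    intro k
    have he : (fun y => Wgrad g V k y) = fun y => ∑ l, Ginv g y k l * pd V l y := rfl
    rw [he]
    exact Differentiable.fun_sum fun l _ => (hGd k l).mul (hpdVd l)
  -- symmetry facts
  have hsym : ∀ (y : Fin n → ℝ) (a c : Fin n), g y a c = g y c a :=
    fun y a c => ((hgsymm y).apply a c).symm
  have hGsym : ∀ (y : Fin n → ℝ) (a c : Fin n), Ginv g y a c = Ginv g y c a := by
    intro y a c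
    have h1 : (Ginv g y).transpose = Ginv g y := by
      rw [Ginv, Matrix.transpose_nonsing_inv, (hgsymm y).eq]
    calc Ginv g y a c = (Ginv g y).transpose c a := rfl
      _ = Ginv g y c a := by rw [h1]
  -- contraction identities
  have hgG : ∀ (y : Fin n → ℝ) (a c : Fin n),
      ∑ m, g y a m * Ginv g y m c = if a = c then (1:ℝ) else 0 := by
    intro y a c
    have h2 : (g y * Ginv g y) a c = (1 : Matrix (Fin n) (Fin n) ℝ) a c := by
      rw [Ginv, Matrix.mul_nonsing_inv (g y) (hginv y)]
    rw [Matrix.mul_apply] at h2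
    rw [h2, Matrix.one_apply]
  have hGg : ∀ (y : Fin n → ℝ) (a c : Fin n),
      ∑ m, Ginv g y a m * g y m c = if a = c then (1:ℝ) else 0 := by
    intro y a c
    have h2 : (Ginv g y * g y) a c = (1 : Matrix (Fin n) (Fin n) ℝ) a c := by
      rw [Ginv, Matrix.nonsing_inv_mul (g y) (hginv y)]
    rw [Matrix.mul_apply] at h2
    rw [h2, Matrix.one_apply]
  have hcontr : ∀ (y : Fin n → ℝ) (v : Fin n → ℝ) (a : Fin n),
      ∑ k, g y a k * (∑ l, Ginv g y k l * v l) = v a := by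
    intro y v a
    calc ∑ k, g y a k * ∑ l, Ginv g y k l * v l
        = ∑ k, ∑ l, g y a k * (Ginv g y k l * v l) :=
          Finset.sum_congr rfl fun k _ => Finset.mul_sum _ _ _
      _ = ∑ l, ∑ k, g y a k * (Ginv g y k l * v l) := Finset.sum_comm
      _ = ∑ l, (∑ k, g y a k * Ginv g y k l) * v l := by
          refine Finset.sum_congr rfl fun l _ => ?_
          rw [Finset.sum_mul]; exact Finset.sum_congr rfl fun k _ => by ring
      _ = ∑ l, (if a = l then (1:ℝ) else 0) * v l :=
          Finset.sum_congr rfl fun l _ => by rw [hgG y a l]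
      _ = v a := by simp
  have hlow : ∀ (y : Fin n → ℝ) (a : Fin n), ∑ j, g y a j * Wgrad g V j y = pd V a y :=
    fun y a => hcontr y (fun l => pd V l y) a
  -- product rule on the lowered gradient
  have F5 : ∀ (m a : Fin n), ∑ j, (pd (fun y => g y a j) m (q t) * Wgrad g V j (q t)
      + g (q t) a j * pd (fun y => Wgrad g V j y) m (q t)) = pd (fun y => pd V a y) m (q t) := by
    intro m a
    calc ∑ j, (pd (fun y => g y a j) m (q t) * Wgrad g V j (q t)
          + g (q t) a j * pd (fun y => Wgrad g V j y) m (q t))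
        = ∑ j, pd (fun y => g y a j * Wgrad g V j y) m (q t) :=
          Finset.sum_congr rfl fun j _ =>
            (pd_mul _ _ _ _ ((hgd a j) (q t)) ((hWd j) (q t))).symm
      _ = pd (fun y => ∑ j, g y a j * Wgrad g V j y) m (q t) :=
          (pd_sum _ _ _ _ fun j _ => ((hgd a j) (q t)).mul ((hWd j) (q t))).symm
      _ = pd (fun y => pd V a y) m (q t) := by
          rw [show (fun y => ∑ j, g y a j * Wgrad g V j y) = fun y => pd V a y from
            funext fun y => hlow y a]
  have hgDW : ∀ (m p : Fin n), ∑ j, g (q t) p j * pd (fun y => Wgrad g V j y) m (q t)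
      = pd (fun y => pd V p y) m (q t)
        - ∑ j, pd (fun y => g y p j) m (q t) * Wgrad g V j (q t) := by
    intro m p
    have h := F5 m p
    rw [Finset.sum_add_distrib] at h
    linarith
  -- derivative of the inverse metric
  have F3 : ∀ j k : Fin n, pd (fun y => Ginv g y j k) i (q t)
      = -∑ a, ∑ c, Ginv g (q t) j a * pd (fun y => g y a c) i (q t) * Ginv g (q t) c k := by
    intro j k
    have hz : ∀ c, ∑ m, (pd (fun y => Ginv g y j m) i (q t) * g (q t) m c
        + Ginv g (q t) j m * pd (fun y => g y m c) i (q t)) = 0 := by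
      intro c
      have h1 : (fun y => ∑ m, Ginv g y j m * g y m c) = (fun _ => if j = c then (1:ℝ) else 0) :=
        funext fun y => by rw [hGg y j c]
      have h3 : ∑ m, (pd (fun y => Ginv g y j m) i (q t) * g (q t) m c
          + Ginv g (q t) j m * pd (fun y => g y m c) i (q t))
          = pd (fun y => ∑ m, Ginv g y j m * g y m c) i (q t) := by
        rw [pd_sum _ _ _ _ fun m _ => ((hGd j m) (q t)).fun_mul ((hgd m c) (q t))]
        exact Finset.sum_congr rfl fun m _ =>
          (pd_mul _ _ _ _ ((hGd j m) (q t)) ((hgd m c) (q t))).symm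
      rw [h3, h1, pd_const]
    have h4 : ∑ c, (∑ m, (pd (fun y => Ginv g y j m) i (q t) * g (q t) m c
        + Ginv g (q t) j m * pd (fun y => g y m c) i (q t))) * Ginv g (q t) c k = 0 := by
      simp only [hz]; simp
    have h5 : ∑ c, (∑ m, (pd (fun y => Ginv g y j m) i (q t) * g (q t) m c
        + Ginv g (q t) j m * pd (fun y => g y m c) i (q t))) * Ginv g (q t) c k
        = pd (fun y => Ginv g y j k) i (q t)
          + ∑ a, ∑ c, Ginv g (q t) j a * pd (fun y => g y a c) i (q t) * Ginv g (q t) c k := by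
      have h6 : ∀ c, (∑ m, (pd (fun y => Ginv g y j m) i (q t) * g (q t) m c
          + Ginv g (q t) j m * pd (fun y => g y m c) i (q t))) * Ginv g (q t) c k
          = (∑ m, pd (fun y => Ginv g y j m) i (q t) * g (q t) m c) * Ginv g (q t) c k
            + (∑ m, Ginv g (q t) j m * pd (fun y => g y m c) i (q t)) * Ginv g (q t) c k := by
        intro c; rw [Finset.sum_add_distrib, add_mul]
      rw [Finset.sum_congr rfl fun c _ => h6 c, Finset.sum_add_distrib]
      congr 1
      · calc ∑ c, (∑ m, pd (fun y => Ginv g y j m) i (q t) * g (q t) m c) * Ginv g (q t) c k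
            = ∑ c, ∑ m, pd (fun y => Ginv g y j m) i (q t) * g (q t) m c * Ginv g (q t) c k :=
              Finset.sum_congr rfl fun c _ => Finset.sum_mul _ _ _
          _ = ∑ m, ∑ c, pd (fun y => Ginv g y j m) i (q t) * g (q t) m c * Ginv g (q t) c k :=
              Finset.sum_comm
          _ = ∑ m, pd (fun y => Ginv g y j m) i (q t) * (∑ c, g (q t) m c * Ginv g (q t) c k) := by
              refine Finset.sum_congr rfl fun m _ => ?_
              rw [Finset.mul_sum]; exact Finset.sum_congr rfl fun c _ => by ring
          _ = ∑ m, pd (fun y => Ginv g y j m) i (q t) * (if m = k then (1:ℝ) else 0) :=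
              Finset.sum_congr rfl fun m _ => by rw [hgG (q t) m k]
          _ = pd (fun y => Ginv g y j k) i (q t) := by simp
      · calc ∑ c, (∑ m, Ginv g (q t) j m * pd (fun y => g y m c) i (q t)) * Ginv g (q t) c k
            = ∑ c, ∑ m, Ginv g (q t) j m * pd (fun y => g y m c) i (q t) * Ginv g (q t) c k :=
              Finset.sum_congr rfl fun c _ => Finset.sum_mul _ _ _
          _ = ∑ a, ∑ c, Ginv g (q t) j a * pd (fun y => g y a c) i (q t) * Ginv g (q t) c k :=
              Finset.sum_comm
    linarith
  -- raising the covector gives back b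
  have hraise' : ∀ a : Fin n, ∑ k, Ginv g (q t) a k * (∑ l, g (q t) k l * b t l) = b t a := by
    intro a
    calc ∑ k, Ginv g (q t) a k * (∑ l, g (q t) k l * b t l)
        = ∑ k, ∑ l, Ginv g (q t) a k * (g (q t) k l * b t l) :=
          Finset.sum_congr rfl fun k _ => Finset.mul_sum _ _ _
      _ = ∑ l, ∑ k, Ginv g (q t) a k * (g (q t) k l * b t l) := Finset.sum_comm
      _ = ∑ l, (∑ k, Ginv g (q t) a k * g (q t) k l) * b t l := by
          refine Finset.sum_congr rfl fun l _ => ?_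
          rw [Finset.sum_mul]; exact Finset.sum_congr rfl fun k _ => by ring
      _ = ∑ l, (if a = l then (1:ℝ) else 0) * b t l :=
          Finset.sum_congr rfl fun l _ => by rw [hGg (q t) a l]
      _ = b t a := by simp
  -- lowered Christoffel symbols
  have hGL : ∀ a c : Fin n, ∑ k, g (q t) i k * Gamma g k a c (q t)
      = (1/2) * (pd (fun y => g y c i) a (q t) + pd (fun y => g y a i) c (q t)
          - pd (fun y => g y a c) i (q t)) := by
    intro a c
    calc ∑ k, g (q t) i k * Gamma g k a c (q t)
        = ∑ k, g (q t) i k * (∑ l, Ginv g (q t) k l *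
            ((1/2) * (pd (fun y => g y c l) a (q t) + pd (fun y => g y a l) c (q t)
              - pd (fun y => g y a c) l (q t)))) := by
          refine Finset.sum_congr rfl fun k _ => ?_
          rw [Gamma, Finset.mul_sum]
          congr 1
          exact Finset.sum_congr rfl fun l _ => by ring
      _ = (1/2) * (pd (fun y => g y c i) a (q t) + pd (fun y => g y a i) c (q t)
            - pd (fun y => g y a c) i (q t)) :=
          hcontr (q t) (fun l => (1/2) * (pd (fun y => g y c l) a (q t)
            + pd (fun y => g y a l) c (q t) - pd (fun y => g y a c) l (q t))) i
  -- the actual derivative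
  have key : HasDerivAt (fun s => ∑ j, g (q s) i j * b s j)
      (∑ j, ((∑ l, pd (fun y => g y i j) l (q t) * dq t l) * b t j + g (q t) i j * db t j)) t := by
    apply HasDerivAt.fun_sum
    intro j _
    exact (hasDerivAt_pd_comp (fun y => g y i j) q (dq t) t ((hgd i j) (q t))
      (fun l => hq l t)).mul (hb j t)
  -- rewrite the first big sum
  have hT1s : ∀ k : Fin n, pd (fun y => ∑ j, Ginv g y j k * pd V j y) i (q t)
      = pd (fun y => Wgrad g V k y) i (q t) := by
    intro k
    rw [show (fun y => ∑ j, Ginv g y j k * pd V j y) = (fun y => Wgrad g V k y) from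
      funext fun y => by
        simp only [Wgrad]
        exact Finset.sum_congr rfl fun j _ => by rw [hGsym y j k]]
  have hA : (∑ k, pd (fun y => ∑ j, Ginv g y j k * pd V j y) i (q t) * (∑ j, g (q t) k j * b t j))
      = ∑ l, b t l * (pd (fun y => pd V l y) i (q t)
          - ∑ j, pd (fun y => g y l j) i (q t) * Wgrad g V j (q t)) := by
    calc ∑ k, pd (fun y => ∑ j, Ginv g y j k * pd V j y) i (q t) * (∑ j, g (q t) k j * b t j)
        = ∑ k, pd (fun y => Wgrad g V k y) i (q t) * (∑ j, g (q t) k j * b t j) :=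
          Finset.sum_congr rfl fun k _ => by rw [hT1s k]
      _ = ∑ j, b t j * (∑ k, g (q t) k j * pd (fun y => Wgrad g V k y) i (q t)) :=
          swap_weight (fun k j => g (q t) k j)
            (fun k => pd (fun y => Wgrad g V k y) i (q t)) (b t)
      _ = ∑ j, b t j * (∑ k, g (q t) j k * pd (fun y => Wgrad g V k y) i (q t)) := by
          refine Finset.sum_congr rfl fun j _ => ?_
          congr 1
          exact Finset.sum_congr rfl fun k _ => by rw [hsym (q t) k j]
      _ = ∑ j, b t j * (pd (fun y => pd V j y) i (q t)
            - ∑ k, pd (fun y => g y j k) i (q t) * Wgrad g V k (q t)) := by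
          refine Finset.sum_congr rfl fun j _ => ?_
          rw [hgDW i j]
  -- rewrite the second big sum
  have hT2 : ∑ j, ∑ k, pd (fun y => Ginv g y j k) i (q t) * (∑ l, g (q t) j l * b t l)
        * (∑ l, g (q t) k l * b t l)
      = -∑ a, ∑ c, pd (fun y => g y a c) i (q t) * b t a * b t c := by
    calc ∑ j, ∑ k, pd (fun y => Ginv g y j k) i (q t) * (∑ l, g (q t) j l * b t l)
          * (∑ l, g (q t) k l * b t l)
        = ∑ j, ∑ k, -(∑ a, ∑ c, Ginv g (q t) j a * pd (fun y => g y a c) i (q t)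
            * Ginv g (q t) c k * (∑ l, g (q t) j l * b t l) * (∑ l, g (q t) k l * b t l)) := by
          refine Finset.sum_congr rfl fun j _ => Finset.sum_congr rfl fun k _ => ?_
          rw [F3 j k, neg_mul, neg_mul, neg_inj, Finset.sum_mul, Finset.sum_mul]
          refine Finset.sum_congr rfl fun a _ => ?_
          rw [Finset.sum_mul, Finset.sum_mul]
      _ = -(∑ j, ∑ k, ∑ a, ∑ c, Ginv g (q t) j a * pd (fun y => g y a c) i (q t)
            * Ginv g (q t) c k * (∑ l, g (q t) j l * b t l) * (∑ l, g (q t) k l * b t l)) := by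
          simp only [Finset.sum_neg_distrib]
      _ = -(∑ a, ∑ c, ∑ j, ∑ k, Ginv g (q t) j a * pd (fun y => g y a c) i (q t)
            * Ginv g (q t) c k * (∑ l, g (q t) j l * b t l) * (∑ l, g (q t) k l * b t l)) := by
          rw [sum_comm4]
      _ = -∑ a, ∑ c, pd (fun y => g y a c) i (q t) * b t a * b t c := by
          refine congrArg Neg.neg
            (Finset.sum_congr rfl fun a _ => Finset.sum_congr rfl fun c _ => ?_)
          rw [double_factor (fun j => Ginv g (q t) j a) (fun k => Ginv g (q t) c k)
            (fun j => ∑ l, g (q t) j l * b t l) (pd (fun y => g y a c) i (q t))]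
          have r1 : ∑ j, Ginv g (q t) j a * (∑ l, g (q t) j l * b t l) = b t a := by
            have hj : ∀ j, Ginv g (q t) j a * (∑ l, g (q t) j l * b t l)
                = Ginv g (q t) a j * (∑ l, g (q t) j l * b t l) := fun j => by
              rw [hGsym (q t) j a]
            rw [Finset.sum_congr rfl fun j _ => hj j]
            exact hraise' a
          have r2 : ∑ k, Ginv g (q t) c k * (∑ l, g (q t) k l * b t l) = b t c := hraise' c
          rw [r1, r2]
  -- expand ∑ g db using the Euler–Lagrange equation
  have h0 : ∀ j, db t j = (∑ a, b t a * pd (fun y => Wgrad g V j y) a (q t))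
      + ((∑ a, ∑ c, Gamma g j a c (q t) * b t a * Wgrad g V c (q t))
         - ∑ a, ∑ c, Gamma g j a c (q t) * dq t a * b t c) := by
    intro j
    have h := hEL j t
    linarith
  have p1 : ∑ j, g (q t) i j * (∑ a, b t a * pd (fun y => Wgrad g V j y) a (q t))
      = ∑ a, b t a * (∑ j, g (q t) i j * pd (fun y => Wgrad g V j y) a (q t)) :=
    push2 (fun j => g (q t) i j) (fun a j => pd (fun y => Wgrad g V j y) a (q t)) (b t)
  have p2 : ∑ j, g (q t) i j * (∑ a, ∑ c, Gamma g j a c (q t) * b t a * Wgrad g V c (q t))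
      = ∑ a, ∑ c, (∑ j, g (q t) i j * Gamma g j a c (q t)) * b t a * Wgrad g V c (q t) :=
    push3 (fun j => g (q t) i j) (fun j a c => Gamma g j a c (q t)) (b t)
      (fun c => Wgrad g V c (q t))
  have p3 : ∑ j, g (q t) i j * (∑ a, ∑ c, Gamma g j a c (q t) * dq t a * b t c)
      = ∑ a, ∑ c, (∑ j, g (q t) i j * Gamma g j a c (q t)) * dq t a * b t c :=
    push3 (fun j => g (q t) i j) (fun j a c => Gamma g j a c (q t)) (dq t) (b t)
  have hE2 : ∑ j, g (q t) i j * db t j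
      = (∑ a, b t a * (∑ j, g (q t) i j * pd (fun y => Wgrad g V j y) a (q t)))
        + ((∑ a, ∑ c, (∑ j, g (q t) i j * Gamma g j a c (q t)) * b t a * Wgrad g V c (q t))
           - ∑ a, ∑ c, (∑ j, g (q t) i j * Gamma g j a c (q t)) * dq t a * b t c) := by
    calc ∑ j, g (q t) i j * db t j
        = ∑ j, (g (q t) i j * (∑ a, b t a * pd (fun y => Wgrad g V j y) a (q t))
            + (g (q t) i j * (∑ a, ∑ c, Gamma g j a c (q t) * b t a * Wgrad g V c (q t))
               - g (q t) i j * (∑ a, ∑ c, Gamma g j a c (q t) * dq t a * b t c))) := by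
          refine Finset.sum_congr rfl fun j _ => ?_
          rw [h0 j]; ring
      _ = (∑ j, g (q t) i j * (∑ a, b t a * pd (fun y => Wgrad g V j y) a (q t)))
          + ((∑ j, g (q t) i j * (∑ a, ∑ c, Gamma g j a c (q t) * b t a * Wgrad g V c (q t)))
             - ∑ j, g (q t) i j * (∑ a, ∑ c, Gamma g j a c (q t) * dq t a * b t c)) := by
          rw [Finset.sum_add_distrib, Finset.sum_sub_distrib]
      _ = _ := by rw [p1, p2, p3]
  -- component equalities for the final linear combination
  have c0 : ∑ j, ((∑ l, pd (fun y => g y i j) l (q t) * dq t l) * b t j + g (q t) i j * db t j)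
      = (∑ j, (∑ l, pd (fun y => g y i j) l (q t) * dq t l) * b t j)
        + ∑ j, g (q t) i j * db t j := Finset.sum_add_distrib
  have c1 : ∑ j, (∑ l, pd (fun y => g y i j) l (q t) * dq t l) * b t j
      = ∑ j, (∑ l, pd (fun y => g y i j) l (q t) * (b t l - Wgrad g V l (q t))) * b t j := by
    refine Finset.sum_congr rfl fun j _ => ?_
    congr 1
    exact Finset.sum_congr rfl fun l _ => by rw [hconstr l t]
  have c3 : ∑ a, b t a * (∑ j, g (q t) i j * pd (fun y => Wgrad g V j y) a (q t))
      = ∑ a, b t a * (pd (fun y => pd V i y) a (q t)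
          - ∑ j, pd (fun y => g y i j) a (q t) * Wgrad g V j (q t)) := by
    refine Finset.sum_congr rfl fun a _ => ?_
    rw [hgDW a i]
  have c4 : ∑ a, ∑ c, (∑ j, g (q t) i j * Gamma g j a c (q t)) * b t a * Wgrad g V c (q t)
      = ∑ a, ∑ c, (1/2) * (pd (fun y => g y c i) a (q t) + pd (fun y => g y a i) c (q t)
          - pd (fun y => g y a c) i (q t)) * b t a * Wgrad g V c (q t) := by
    refine Finset.sum_congr rfl fun a _ => Finset.sum_congr rfl fun c _ => ?_
    rw [hGL a c]
  have c5 : ∑ a, ∑ c, (∑ j, g (q t) i j * Gamma g j a c (q t)) * dq t a * b t c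
      = ∑ a, ∑ c, (1/2) * (pd (fun y => g y c i) a (q t) + pd (fun y => g y a i) c (q t)
          - pd (fun y => g y a c) i (q t)) * (b t a - Wgrad g V a (q t)) * b t c := by
    refine Finset.sum_congr rfl fun a _ => Finset.sum_congr rfl fun c _ => ?_
    rw [hGL a c, hconstr a t]
  have hDsym : ∀ d p r : Fin n, pd (fun y => g y p r) d (q t) = pd (fun y => g y r p) d (q t) :=
    fun d p r => by
      rw [show (fun y => g y p r) = (fun y => g y r p) from funext fun y => hsym y p r]
  have hkey :
      (∑ j, (∑ l, pd (fun y => g y i j) l (q t) * (b t l - Wgrad g V l (q t))) * b t j)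
      + ((∑ a, b t a * (pd (fun y => pd V i y) a (q t)
            - ∑ j, pd (fun y => g y i j) a (q t) * Wgrad g V j (q t)))
         + (∑ a, ∑ c, (1/2) * (pd (fun y => g y c i) a (q t) + pd (fun y => g y a i) c (q t)
              - pd (fun y => g y a c) i (q t)) * b t a * Wgrad g V c (q t))
         - ∑ a, ∑ c, (1/2) * (pd (fun y => g y c i) a (q t) + pd (fun y => g y a i) c (q t)
              - pd (fun y => g y a c) i (q t)) * (b t a - Wgrad g V a (q t)) * b t c)
      = (∑ l, b t l * (pd (fun y => pd V l y) i (q t)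
            - ∑ j, pd (fun y => g y l j) i (q t) * Wgrad g V j (q t)))
        + (1/2) * ∑ a, ∑ c, pd (fun y => g y a c) i (q t) * b t a * b t c :=
    keyalg (fun d p r => pd (fun y => g y p r) d (q t)) hDsym
      (fun p r => pd (fun y => pd V p y) r (q t)) (fun p r => pd_comm hV p r (q t))
      (b t) (fun j => Wgrad g V j (q t)) i
  have hfinal : (∑ k, pd (fun y => ∑ j, Ginv g y j k * pd V j y) i (q t)
        * (∑ j, g (q t) k j * b t j))
      - (1/2) * ∑ j, ∑ k, pd (fun y => Ginv g y j k) i (q t)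
        * (∑ l, g (q t) j l * b t l) * (∑ l, g (q t) k l * b t l)
      = ∑ j, ((∑ l, pd (fun y => g y i j) l (q t) * dq t l) * b t j
          + g (q t) i j * db t j) := by
    linarith [hkey, hA, hT2, hE2, c0, c1, c3, c4, c5]
  rw [hfinal]
  exact key
end

section
/- (Hopf–Cole for the Schrödinger bridge, second component.) Let γ > 0, d ≥ 1, and let ρ, φ : ℝ × ℝᵈ → ℝ be C² with ρ(t,x) > 0 for all (t,x). Suppose ∂ₜφ + (1/2)‖∇ₓφ‖² = −γ Δₓφ and ∂ₜρ + divₓ(ρ ∇ₓφ) = γ Δₓρ hold everywhere. Then η*(t,x) := ρ(t,x) exp(−φ(t,x)/(2γ)) satisfies the forward heat equation ∂ₜη*(t,x) = γ Δₓη*(t,x) for all (t,x). -/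
/-- Time derivative `∂ₜF` of `F : ℝ × ℝᵈ → ℝ`. -/
noncomputable def pt {d : ℕ} (F : ℝ × (Fin d → ℝ) → ℝ) (p : ℝ × (Fin d → ℝ)) : ℝ :=
  fderiv ℝ F p (1, 0)

/-- Spatial partial derivative `∂ᵢF` of `F : ℝ × ℝᵈ → ℝ` in the `i`-th
coordinate direction. -/
noncomputable def px {d : ℕ} (F : ℝ × (Fin d → ℝ) → ℝ) (i : Fin d)
    (p : ℝ × (Fin d → ℝ)) : ℝ :=
  fderiv ℝ F p (0, Pi.single i 1)

section helpers
variable {d : ℕ}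

private lemma pt_eq (F : ℝ × (Fin d → ℝ) → ℝ) :
    pt F = fun p => fderiv ℝ F p (1, 0) := rfl

private lemma px_eq (F : ℝ × (Fin d → ℝ) → ℝ) (i : Fin d) :
    px F i = fun p => fderiv ℝ F p (0, Pi.single i 1) := rfl

private lemma fda_mul {F G : ℝ × (Fin d → ℝ) → ℝ} {p v}
    (hF : DifferentiableAt ℝ F p) (hG : DifferentiableAt ℝ G p) :
    fderiv ℝ (fun q => F q * G q) p v
      = fderiv ℝ F p v * G p + F p * fderiv ℝ G p v := by
  rw [fderiv_fun_mul hF hG]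
  simp [smul_eq_mul]
  ring

private lemma fda_add {F G : ℝ × (Fin d → ℝ) → ℝ} {p v}
    (hF : DifferentiableAt ℝ F p) (hG : DifferentiableAt ℝ G p) :
    fderiv ℝ (fun q => F q + G q) p v
      = fderiv ℝ F p v + fderiv ℝ G p v := by
  rw [fderiv_fun_add hF hG]; simp

private lemma fda_exp {F : ℝ × (Fin d → ℝ) → ℝ} {p v}
    (hF : DifferentiableAt ℝ F p) :
    fderiv ℝ (fun q => Real.exp (F q)) p v = Real.exp (F p) * fderiv ℝ F p v := by
  rw [fderiv_exp hF]; simp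

private lemma fda_const_mul {F : ℝ × (Fin d → ℝ) → ℝ} {p v} (c : ℝ)
    (hF : DifferentiableAt ℝ F p) :
    fderiv ℝ (fun q => c * F q) p v = c * fderiv ℝ F p v := by
  rw [fderiv_const_mul hF]; simp

private lemma diff_fd {F : ℝ × (Fin d → ℝ) → ℝ} (hF : ContDiff ℝ 2 F)
    (v : ℝ × (Fin d → ℝ)) :
    Differentiable ℝ (fun q => fderiv ℝ F q v) := by
  have h : ContDiff ℝ 1 (fun q => fderiv ℝ F q v) :=
    (hF.fderiv_right (m := 1) (by norm_num)).clm_apply contDiff_const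
  exact h.differentiable (by norm_num)

end helpers


/-- Hopf–Cole for the Schrödinger bridge, second component: if
`ρ > 0` and `φ` are C², `φ` solves the HJB equation and `ρ` solves the
Fokker–Planck equation `∂ₜρ + divₓ(ρ∇ₓφ) = γΔₓρ`, then `η* = ρ exp(−φ/(2γ))`
solves the forward heat equation `∂ₜη* = γΔₓη*`. -/
theorem stmt10 (γ : ℝ) (hγ : 0 < γ) {d : ℕ} (hd : 1 ≤ d)
    (ρ φ : ℝ × (Fin d → ℝ) → ℝ) (hρ : ContDiff ℝ 2 ρ) (hφ : ContDiff ℝ 2 φ)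
    (hpos : ∀ p, 0 < ρ p)
    (hHJB : ∀ p, pt φ p + (1/2) * ∑ i, (px φ i p)^2
      = -γ * ∑ i, px (px φ i) i p)
    (hFP : ∀ p, pt ρ p + ∑ i, px (fun q => ρ q * px φ i q) i p
      = γ * ∑ i, px (px ρ i) i p) :
    ∀ p, pt (fun q => ρ q * Real.exp (-φ q / (2*γ))) p
      = γ * ∑ i, px (px (fun q => ρ q * Real.exp (-φ q / (2*γ))) i) i p := by
  have hγ2 : (2:ℝ) * γ ≠ 0 := by positivity
  set c : ℝ := -(1/(2*γ)) with hc
  set E : ℝ × (Fin d → ℝ) → ℝ := fun q => Real.exp (c * φ q) with hE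
  -- differentiability facts
  have hρd : Differentiable ℝ ρ := hρ.differentiable (by norm_num)
  have hφd : Differentiable ℝ φ := hφ.differentiable (by norm_num)
  have hcφd : Differentiable ℝ (fun q => c * φ q) := hφd.const_mul c
  have hEd : Differentiable ℝ E := hcφd.exp
  have hEval : ∀ (q : ℝ × (Fin d → ℝ)) v,
      fderiv ℝ E q v = E q * (c * fderiv ℝ φ q v) := by
    intro q v
    rw [hE, fda_exp (hcφd q), fda_const_mul c (hφd q)]
  have hfun : (fun q : ℝ × (Fin d → ℝ) => ρ q * Real.exp (-φ q / (2*γ)))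
      = fun q => ρ q * E q := by
    funext q
    have h : -φ q / (2*γ) = c * φ q := by rw [hc]; ring
    rw [h, hE]
  intro p
  rw [hfun]
  simp only [pt_eq, px_eq] at hHJB hFP ⊢
  set v : Fin d → ℝ × (Fin d → ℝ) := fun i => ((0:ℝ), Pi.single i (1:ℝ)) with hv
  -- first derivative of η = ρ E
  have hfirst : ∀ (q : ℝ × (Fin d → ℝ)) w, fderiv ℝ (fun q => ρ q * E q) q w
      = fderiv ℝ ρ q w * E q + ρ q * (E q * (c * fderiv ℝ φ q w)) := by
    intro q w
    rw [fda_mul (hρd q) (hEd q), hEval]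
  have hg1 : ∀ i, Differentiable ℝ (fun q => fderiv ℝ ρ q (v i)) :=
    fun i => diff_fd hρ (v i)
  have hg2 : ∀ i, Differentiable ℝ (fun q => fderiv ℝ φ q (v i)) :=
    fun i => diff_fd hφ (v i)
  -- second derivative of η
  have hsecond : ∀ i, fderiv ℝ (fun q => fderiv ℝ (fun q' => ρ q' * E q') q (v i)) p (v i)
      = E p * (fderiv ℝ (fun q => fderiv ℝ ρ q (v i)) p (v i)
          + 2 * c * fderiv ℝ ρ p (v i) * fderiv ℝ φ p (v i)
          + c ^ 2 * ρ p * (fderiv ℝ φ p (v i)) ^ 2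
          + c * ρ p * fderiv ℝ (fun q => fderiv ℝ φ q (v i)) p (v i)) := by
    intro i
    have hrw : (fun q => fderiv ℝ (fun q' => ρ q' * E q') q (v i))
        = fun q => fderiv ℝ ρ q (v i) * E q + ρ q * (E q * (c * fderiv ℝ φ q (v i))) := by
      funext q; exact hfirst q (v i)
    rw [hrw]
    have hu : Differentiable ℝ (fun q => E q * (c * fderiv ℝ φ q (v i))) :=
      hEd.mul ((hg2 i).const_mul c)
    rw [fda_add (((hg1 i) p).fun_mul (hEd p)) ((hρd p).fun_mul (hu p)),
        fda_mul ((hg1 i) p) (hEd p),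
        fda_mul (hρd p) (hu p),
        fda_mul (hEd p) (((hg2 i).const_mul c) p),
        fda_const_mul c ((hg2 i) p), hEval]
    ring
  rw [hfirst p (1, 0), Finset.sum_congr rfl (fun i _ => hsecond i)]
  -- expand FP product term
  have hFP' : fderiv ℝ ρ p (1, 0)
      + ∑ i, (fderiv ℝ ρ p (v i) * fderiv ℝ φ p (v i)
          + ρ p * fderiv ℝ (fun q => fderiv ℝ φ q (v i)) p (v i))
      = γ * ∑ i, fderiv ℝ (fun q => fderiv ℝ ρ q (v i)) p (v i) := by
    have := hFP p
    rw [Finset.sum_congr rfl (fun i _ => fda_mul (hρd p) ((hg2 i) p))] at this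
    exact this
  have hHJB' := hHJB p
  -- abbreviate the sums
  set SA := ∑ i, fderiv ℝ (fun q => fderiv ℝ ρ q (v i)) p (v i) with hSA
  set SB := ∑ i, fderiv ℝ (fun q => fderiv ℝ φ q (v i)) p (v i) with hSB
  set Sab := ∑ i, fderiv ℝ ρ p (v i) * fderiv ℝ φ p (v i) with hSab
  set Sb2 := ∑ i, (fderiv ℝ φ p (v i)) ^ 2 with hSb2
  have hsum : ∑ i, E p * (fderiv ℝ (fun q => fderiv ℝ ρ q (v i)) p (v i)
          + 2 * c * fderiv ℝ ρ p (v i) * fderiv ℝ φ p (v i)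
          + c ^ 2 * ρ p * (fderiv ℝ φ p (v i)) ^ 2
          + c * ρ p * fderiv ℝ (fun q => fderiv ℝ φ q (v i)) p (v i))
      = E p * SA + 2 * c * E p * Sab + c ^ 2 * ρ p * E p * Sb2 + c * ρ p * E p * SB := by
    rw [hSA, hSB, hSab, hSb2, Finset.mul_sum, Finset.mul_sum, Finset.mul_sum, Finset.mul_sum,
        ← Finset.sum_add_distrib, ← Finset.sum_add_distrib, ← Finset.sum_add_distrib]
    exact Finset.sum_congr rfl fun i _ => by ring
  rw [hsum]
  have hFP'' : fderiv ℝ ρ p (1, 0) + (Sab + ρ p * SB) = γ * SA := by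
    rw [hSab, hSB, Finset.mul_sum, ← Finset.sum_add_distrib]
    exact hFP'
  have e1 : fderiv ℝ ρ p (1, 0) = γ * SA - Sab - ρ p * SB := by linarith
  have e2 : fderiv ℝ φ p (1, 0) = -γ * SB - (1/2) * Sb2 := by linarith
  rw [e1, e2, hc]
  field_simp
  ring
end

section
/- (Pointwise form of the equivalence between the Schrödinger bridge and Yasue actions.) Let γ ∈ ℝ, d ≥ 1, let ρ : ℝ × ℝᵈ → ℝ be C² with ρ(t,x) > 0 for all (t,x), and let v : ℝ × ℝᵈ → ℝᵈ be C¹ such that the continuity equation ∂ₜρ + divₓ(ρ v) = 0 holds everywhere. Define b(t,x) := v(t,x) + γ ∇ₓ(ln ρ)(t,x). Then pointwise, for all (t,x): (1/2)‖b‖² ρ = (1/2)‖v‖² ρ + (γ²/2) ‖∇ₓρ‖²/ρ + γ ∂ₜ(ρ ln ρ) + γ divₓ( ρ (ln ρ + 1) v ). -/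
/-- Algebraic core of stmt13. -/
lemma stmt13_alg (γ : ℝ) {d : ℕ} (r Lt : ℝ) (V Li W : Fin d → ℝ) (hr : r ≠ 0)
    (hc : Lt + ∑ i, (r * W i + V i * Li i) = 0) :
    (1/2) * (∑ i, (V i + γ * (r⁻¹ * Li i))^2) * r
      = (1/2) * (∑ i, (V i)^2) * r + (γ^2/2) * (∑ i, (Li i)^2) / r
        + γ * ((Real.log r + 1) * Lt)
        + γ * ∑ i, ((r * (Real.log r + 1)) * W i
            + V i * (r * (r⁻¹ * Li i) + (Real.log r + 1) * Li i)) := by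
  set l := Real.log r with hl
  have e1 : (∑ i, (V i + γ * (r⁻¹ * Li i))^2)
      = ∑ i, (V i)^2 + (2*γ*r⁻¹) * ∑ i, V i * Li i
        + (γ^2*r⁻¹*r⁻¹) * ∑ i, (Li i)^2 := by
    rw [Finset.mul_sum, Finset.mul_sum, ← Finset.sum_add_distrib, ← Finset.sum_add_distrib]
    exact Finset.sum_congr rfl fun i _ => by ring
  have e2 : (∑ i, ((r * (l + 1)) * W i
        + V i * (r * (r⁻¹ * Li i) + (l + 1) * Li i)))
      = (l+1) * (∑ i, (r * W i + V i * Li i)) + ∑ i, V i * Li i := by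
    rw [Finset.mul_sum, ← Finset.sum_add_distrib]
    refine Finset.sum_congr rfl fun i _ => ?_
    have : r * (r⁻¹ * Li i) = Li i := by field_simp
    rw [this]; ring
  have hsum : (∑ i, (r * W i + V i * Li i)) = -Lt := by linarith
  rw [e1, e2, hsum]
  field_simp
  ring

/-- Pointwise form of the equivalence between the Schrödinger
bridge and Yasue actions: if `ρ > 0` is C², `v` is C¹ and the continuity
equation `∂ₜρ + divₓ(ρv) = 0` holds, then with `b = v + γ∇ₓ(ln ρ)`, pointwise
`(1/2)‖b‖²ρ = (1/2)‖v‖²ρ + (γ²/2)‖∇ₓρ‖²/ρ + γ∂ₜ(ρ ln ρ) + γ divₓ(ρ(ln ρ + 1)v)`. -/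
theorem stmt13 (γ : ℝ) {d : ℕ} (hd : 1 ≤ d)
    (ρ : ℝ × (Fin d → ℝ) → ℝ) (hρ : ContDiff ℝ 2 ρ) (hpos : ∀ p, 0 < ρ p)
    (v : ℝ × (Fin d → ℝ) → Fin d → ℝ) (hv : ∀ i, ContDiff ℝ 1 (fun p => v p i))
    (hcont : ∀ p, pt ρ p + ∑ i, px (fun q => ρ q * v q i) i p = 0)
    (b : ℝ × (Fin d → ℝ) → Fin d → ℝ)
    (hb : ∀ p i, b p i = v p i + γ * px (fun q => Real.log (ρ q)) i p) :
    ∀ p, (1/2) * (∑ i, (b p i)^2) * ρ p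
      = (1/2) * (∑ i, (v p i)^2) * ρ p
        + (γ^2/2) * (∑ i, (px ρ i p)^2) / ρ p
        + γ * pt (fun q => ρ q * Real.log (ρ q)) p
        + γ * ∑ i, px (fun q => ρ q * (Real.log (ρ q) + 1) * v q i) i p := by
  intro p
  have hρd : DifferentiableAt ℝ ρ p :=
    (hρ.differentiable (by norm_num)).differentiableAt
  have hvd : ∀ i, DifferentiableAt ℝ (fun q => v q i) p :=
    fun i => ((hv i).differentiable one_ne_zero).differentiableAt
  have hr : ρ p ≠ 0 := (hpos p).ne'
  have Hρ : HasFDerivAt ρ (fderiv ℝ ρ p) p := hρd.hasFDerivAt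
  have Hv : ∀ i, HasFDerivAt (fun q => v q i) (fderiv ℝ (fun q => v q i) p) p :=
    fun i => (hvd i).hasFDerivAt
  set L := fderiv ℝ ρ p with hLdef
  have Hlog : HasFDerivAt (fun q => Real.log (ρ q)) ((ρ p)⁻¹ • L) p :=
    (Real.hasDerivAt_log hr).comp_hasFDerivAt p Hρ
  have Hplog : HasFDerivAt (fun q => ρ q * Real.log (ρ q)) ((Real.log (ρ p) + 1) • L) p :=
    (Real.hasDerivAt_mul_log hr).comp_hasFDerivAt p Hρ
  have hpxlog : ∀ i, px (fun q => Real.log (ρ q)) i p = (ρ p)⁻¹ * L (0, Pi.single i 1) := by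
    intro i; simp [px, Hlog.fderiv]
  have hpt : pt (fun q => ρ q * Real.log (ρ q)) p = (Real.log (ρ p) + 1) * L (1, 0) := by
    simp [pt, Hplog.fderiv]
  have hpxρv : ∀ i, px (fun q => ρ q * v q i) i p
      = ρ p * fderiv ℝ (fun q => v q i) p (0, Pi.single i 1)
        + v p i * L (0, Pi.single i 1) := by
    intro i
    have : fderiv ℝ (fun q => ρ q * v q i) p = ρ p • fderiv ℝ (fun q => v q i) p + v p i • L :=
      (Hρ.mul (Hv i)).fderiv
    simp [px, this]
  have Hf : ∀ i, HasFDerivAt (fun q => ρ q * (Real.log (ρ q) + 1) * v q i)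
      ((ρ p * (Real.log (ρ p) + 1)) • (fderiv ℝ (fun q => v q i) p)
        + v p i • (ρ p • ((ρ p)⁻¹ • L) + (Real.log (ρ p) + 1) • L)) p :=
    fun i => (Hρ.mul (Hlog.add_const 1)).mul (Hv i)
  have hpxf : ∀ i, px (fun q => ρ q * (Real.log (ρ q) + 1) * v q i) i p
      = (ρ p * (Real.log (ρ p) + 1)) * fderiv ℝ (fun q => v q i) p (0, Pi.single i 1)
        + v p i * (ρ p * ((ρ p)⁻¹ * L (0, Pi.single i 1))
            + (Real.log (ρ p) + 1) * L (0, Pi.single i 1)) := by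
    intro i
    simp only [px, (Hf i).fderiv, ContinuousLinearMap.add_apply,
      ContinuousLinearMap.coe_smul', Pi.smul_apply, smul_eq_mul]
  have hcont' : L (1, 0)
      + ∑ i, (ρ p * fderiv ℝ (fun q => v q i) p (0, Pi.single i 1)
          + v p i * L (0, Pi.single i 1)) = 0 := by
    have := hcont p
    simp only [hpxρv] at this
    simpa [pt, ← hLdef] using this
  have hpx : ∀ i, px ρ i p = L (0, Pi.single i 1) := fun i => rfl
  simp only [hb, hpxlog, hpt, hpxf, hpx]
  exact stmt13_alg γ (ρ p) (L (1, 0)) (fun i => v p i)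
    (fun i => L (0, Pi.single i 1))
    (fun i => fderiv ℝ (fun q => v q i) p (0, Pi.single i 1)) hr hcont'
end

section
/- (Consistency of the Euler–Lagrange equations of the optimal control and mechanics problems, Euclidean case.) Let E be a finite-dimensional real inner product space and V : E → ℝ a C² function with gradient ∇V and second derivative D²V. Suppose q, b : ℝ → E are differentiable with q'(t) = b(t) − ∇V(q(t)) and b'(t) = D²V(q(t))(b(t)) for all t. Then q is twice differentiable and q''(t) = D²V(q(t))(∇V(q(t))) = ∇( x ↦ (1/2)‖∇V(x)‖² )(q(t)) for all t. -/
open RealInnerProductSpace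


/-- Consistency of the Euler–Lagrange equations of the optimal
control and mechanics problems, Euclidean case: if `q' = b − ∇V(q)` and
`b' = D²V(q)(b)`, then `q` is twice differentiable with
`q'' = D²V(q)(∇V(q)) = ∇((1/2)‖∇V‖²)(q)`. -/
theorem stmt14 {E : Type*} [NormedAddCommGroup E] [InnerProductSpace ℝ E]
    [FiniteDimensional ℝ E]
    (V : E → ℝ) (hV : ContDiff ℝ 2 V)
    (gradV : E → E) (hgrad : ∀ x, HasFDerivAt V (innerSL ℝ (gradV x)) x)
    (D2V : E → E →L[ℝ] E) (hD2V : ∀ x, HasFDerivAt gradV (D2V x) x)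
    (q b : ℝ → E)
    (hq : ∀ t, HasDerivAt q (b t - gradV (q t)) t)
    (hb : ∀ t, HasDerivAt b (D2V (q t) (b t)) t) :
    ∀ t, HasDerivAt (fun s => b s - gradV (q s)) (D2V (q t) (gradV (q t))) t
      ∧ HasFDerivAt (fun x => (1/2) * ‖gradV x‖^2)
          (innerSL ℝ (D2V (q t) (gradV (q t)))) (q t) := by
  have hsym : ∀ x v w, ⟪D2V x v, w⟫ = ⟪D2V x w, v⟫ := by
    intro x v w
    have h2 : HasFDerivAt (fun y => innerSL ℝ (gradV y))
        ((innerSL ℝ (E := E)).comp (D2V x)) x :=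
      (innerSL ℝ (E := E)).hasFDerivAt.comp x (hD2V x)
    have := second_derivative_symmetric hgrad h2 v w
    simpa using this
  intro t
  constructor
  · have h1 : HasDerivAt (fun s => gradV (q s)) (D2V (q t) (b t - gradV (q t))) t :=
      (hD2V (q t)).comp_hasDerivAt t (hq t)
    have h2 := (hb t).sub h1
    have : D2V (q t) (b t) - D2V (q t) (b t - gradV (q t)) = D2V (q t) (gradV (q t)) := by
      rw [map_sub]; abel
    rwa [this] at h2
  · set x := q t with hx
    have hin : HasFDerivAt (fun y => ⟪gradV y, gradV y⟫)
        ((fderivInnerCLM ℝ (gradV x, gradV x)).comp ((D2V x).prod (D2V x))) x :=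
      (hD2V x).inner ℝ (hD2V x)
    have hmul := hin.const_mul ((1:ℝ)/2)
    have hfun : (fun y => (1/2 : ℝ) * ⟪gradV y, gradV y⟫)
        = fun y => (1/2 : ℝ) * ‖gradV y‖^2 := by
      funext y; rw [real_inner_self_eq_norm_sq]
    rw [hfun] at hmul
    have heq : (innerSL ℝ (D2V x (gradV x)) : E →L[ℝ] ℝ)
        = ((1/2 : ℝ)) • (fderivInnerCLM ℝ (gradV x, gradV x)).comp ((D2V x).prod (D2V x)) := by
      ext v
      simp only [ContinuousLinearMap.coe_comp', Function.comp_apply,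
        ContinuousLinearMap.prod_apply, fderivInnerCLM_apply,
        ContinuousLinearMap.coe_smul', Pi.smul_apply, innerSL_apply_apply, smul_eq_mul]
      rw [show (inner ℝ (gradV x) ((D2V x) v) : ℝ) = inner ℝ ((D2V x) (gradV x)) v from
        (real_inner_comm _ _).trans (hsym x v (gradV x))]
      rw [hsym x v (gradV x)]
      ring
    rw [heq]
    exact hmul
end

section
/- (Solutions of the geometric Euler–Lagrange equation are critical points of the mechanics action, Euclidean case.) Let E be a finite-dimensional real inner product space, V : E → ℝ a C² function with gradient ∇V, and q : ℝ → E a C² path satisfying q''(t) = D²V(q(t))(∇V(q(t))) for all t ∈ [0,1]. Then for every C² variation h : ℝ → E with h(0) = 0 and h(1) = 0, the function ε ↦ ∫₀¹ ( (1/2)‖q'(t) + ε h'(t)‖² + (1/2)‖∇V(q(t) + ε h(t))‖² ) dt is differentiable at ε = 0 with derivative equal to 0. -/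
open RealInnerProductSpace Metric Set


/-- Solutions of the geometric Euler–Lagrange equation are
critical points of the mechanics action, Euclidean case: if the C² path `q`
satisfies `q'' = D²V(q)(∇V(q))` on `[0,1]`, then for every C² variation `h`
vanishing at `0` and `1`, the derivative at `ε = 0` of
`ε ↦ ∫₀¹ ((1/2)‖q' + εh'‖² + (1/2)‖∇V(q + εh)‖²)` is `0`. -/
theorem stmt15 {E : Type*} [NormedAddCommGroup E] [InnerProductSpace ℝ E]
    [FiniteDimensional ℝ E]
    (V : E → ℝ) (hV : ContDiff ℝ 2 V)
    (gradV : E → E) (hgrad : ∀ x, HasFDerivAt V (innerSL ℝ (gradV x)) x)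
    (D2V : E → E →L[ℝ] E) (hD2V : ∀ x, HasFDerivAt gradV (D2V x) x)
    (q : ℝ → E) (hq : ContDiff ℝ 2 q)
    (hEL : ∀ t ∈ Set.Icc (0:ℝ) 1, deriv (deriv q) t = D2V (q t) (gradV (q t))) :
    ∀ h : ℝ → E, ContDiff ℝ 2 h → h 0 = 0 → h 1 = 0 →
      HasDerivAt (fun ε : ℝ => ∫ t in (0:ℝ)..1,
        ((1/2) * ‖deriv q t + ε • deriv h t‖^2
          + (1/2) * ‖gradV (q t + ε • h t)‖^2)) 0 0 := by
  intro h hh h0 h1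
  -- basic regularity
  have h2 : (2 : WithTop ℕ∞) = 1 + 1 := by norm_num
  have hqd : Differentiable ℝ q ∧ ContDiff ℝ 1 (deriv q) := by
    have := (contDiff_succ_iff_deriv (n := 1)).1 (h2 ▸ hq)
    exact ⟨this.1, this.2.2⟩
  have hhd : Differentiable ℝ h ∧ ContDiff ℝ 1 (deriv h) := by
    have := (contDiff_succ_iff_deriv (n := 1)).1 (h2 ▸ hh)
    exact ⟨this.1, this.2.2⟩
  have hgradV_eq : gradV = fun x => (InnerProductSpace.toDual ℝ E).symm (fderiv ℝ V x) := by
    ext x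
    rw [(hgrad x).fderiv]
    apply ext_inner_right ℝ
    intro v
    rw [InnerProductSpace.toDual_symm_apply]
    rfl
  have hgradC1 : ContDiff ℝ 1 gradV := by
    rw [hgradV_eq]
    exact (InnerProductSpace.toDual ℝ E).symm.contDiff.comp (hV.fderiv_right (by norm_num))
  have hD2V_eq : D2V = fderiv ℝ gradV := by
    ext1 x; rw [(hD2V x).fderiv]
  have hD2Vc : Continuous D2V := by
    rw [hD2V_eq]; exact hgradC1.continuous_fderiv one_ne_zero
  have hgradc : Continuous gradV := hgradC1.continuous
  -- the derivative of the integrand in ε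
  set F' : ℝ → ℝ → ℝ := fun ε t =>
    ⟪deriv q t + ε • deriv h t, deriv h t⟫ +
      ⟪gradV (q t + ε • h t), D2V (q t + ε • h t) (h t)⟫ with hF'
  have contF' : Continuous fun p : ℝ × ℝ => F' p.1 p.2 := by
    have c1 : Continuous fun p : ℝ × ℝ => deriv q p.2 + p.1 • deriv h p.2 :=
      (hqd.2.continuous.comp continuous_snd).add
        (continuous_fst.smul (hhd.2.continuous.comp continuous_snd))
    have c2 : Continuous fun p : ℝ × ℝ => q p.2 + p.1 • h p.2 :=
      (hq.continuous.comp continuous_snd).add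
        (continuous_fst.smul (hh.continuous.comp continuous_snd))
    exact (c1.inner (hhd.2.continuous.comp continuous_snd)).add
      ((hgradc.comp c2).inner ((hD2Vc.comp c2).clm_apply (hh.continuous.comp continuous_snd)))
  -- pointwise derivative in ε
  have hdiff : ∀ (t : ℝ) (ε : ℝ),
      HasDerivAt (fun ε : ℝ => ((1/2) * ‖deriv q t + ε • deriv h t‖^2
        + (1/2) * ‖gradV (q t + ε • h t)‖^2)) (F' ε t) ε := by
    intro t ε
    have hA : HasDerivAt (fun ε : ℝ => deriv q t + ε • deriv h t) (deriv h t) ε := by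
      simpa using ((hasDerivAt_id ε).smul_const (deriv h t)).const_add (deriv q t)
    have hp : HasDerivAt (fun ε : ℝ => q t + ε • h t) (h t) ε := by
      simpa using ((hasDerivAt_id ε).smul_const (h t)).const_add (q t)
    have hG : HasDerivAt (fun ε : ℝ => gradV (q t + ε • h t))
        (D2V (q t + ε • h t) (h t)) ε :=
      (hD2V (q t + ε • h t)).comp_hasDerivAt ε hp
    have e1 : HasDerivAt (fun ε : ℝ => ⟪deriv q t + ε • deriv h t, deriv q t + ε • deriv h t⟫)
        (⟪deriv q t + ε • deriv h t, deriv h t⟫ + ⟪deriv h t, deriv q t + ε • deriv h t⟫) ε :=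
      hA.inner ℝ hA
    have e2 : HasDerivAt (fun ε : ℝ => ⟪gradV (q t + ε • h t), gradV (q t + ε • h t)⟫)
        (⟪gradV (q t + ε • h t), D2V (q t + ε • h t) (h t)⟫ +
          ⟪D2V (q t + ε • h t) (h t), gradV (q t + ε • h t)⟫) ε :=
      hG.inner ℝ hG
    have := ((e1.const_mul (1/2 : ℝ)).add (e2.const_mul (1/2 : ℝ)))
    have hfun : (fun ε : ℝ => ((1/2) * ‖deriv q t + ε • deriv h t‖^2
        + (1/2) * ‖gradV (q t + ε • h t)‖^2))
        = (fun ε : ℝ => (1/2) * ⟪deriv q t + ε • deriv h t, deriv q t + ε • deriv h t⟫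
          + (1/2) * ⟪gradV (q t + ε • h t), gradV (q t + ε • h t)⟫) := by
      funext ε'
      rw [real_inner_self_eq_norm_sq, real_inner_self_eq_norm_sq]
    rw [hfun]
    refine this.congr_deriv ?_
    rw [hF']
    rw [real_inner_comm (deriv q t + ε • deriv h t) (deriv h t),
      real_inner_comm (gradV (q t + ε • h t)) (D2V (q t + ε • h t) (h t))]
    ring
  -- uniform bound on the derivative
  obtain ⟨C, hC⟩ : ∃ C, ∀ p ∈ (Icc (-1:ℝ) 1 ×ˢ Icc (0:ℝ) 1), ‖F' p.1 p.2‖ ≤ C :=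
    (isCompact_Icc.prod isCompact_Icc).exists_bound_of_continuousOn contF'.continuousOn
  -- the main differentiation under the integral
  have key := intervalIntegral.hasDerivAt_integral_of_dominated_loc_of_deriv_le
    (μ := MeasureTheory.volume) (a := (0:ℝ)) (b := 1) (x₀ := (0:ℝ))
    (F := fun ε t => ((1/2) * ‖deriv q t + ε • deriv h t‖^2
          + (1/2) * ‖gradV (q t + ε • h t)‖^2))
    (F' := F') (bound := fun _ => C) (s := ball (0:ℝ) 1) (ball_mem_nhds (0:ℝ) one_pos)
    (by
      filter_upwards with ε
      exact (Continuous.aestronglyMeasurable (by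
        have c1 : Continuous fun t : ℝ => deriv q t + ε • deriv h t :=
          hqd.2.continuous.add (continuous_const.smul hhd.2.continuous)
        have c2 : Continuous fun t : ℝ => q t + ε • h t :=
          hq.continuous.add (continuous_const.smul hh.continuous)
        exact (continuous_const.mul (c1.norm.pow 2)).add
          (continuous_const.mul ((hgradc.comp c2).norm.pow 2))))
      )
    (by
      apply Continuous.intervalIntegrable
      have c1 : Continuous fun t : ℝ => deriv q t + (0:ℝ) • deriv h t :=
        hqd.2.continuous.add (continuous_const.smul hhd.2.continuous)
      have c2 : Continuous fun t : ℝ => q t + (0:ℝ) • h t :=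
        hq.continuous.add (continuous_const.smul hh.continuous)
      exact (continuous_const.mul (c1.norm.pow 2)).add
        (continuous_const.mul ((hgradc.comp c2).norm.pow 2)))
    ((contF'.comp (Continuous.prodMk_right (0:ℝ))).aestronglyMeasurable)
    (by
      filter_upwards with t
      intro ht ε hε
      have hε' : |ε| < 1 := by simpa [Real.dist_eq] using hε
      have h1' : ε ∈ Icc (-1:ℝ) 1 := ⟨by linarith [(abs_lt.1 hε').1], le_of_lt (abs_lt.1 hε').2⟩
      have h2' : t ∈ Icc (0:ℝ) 1 :=
        Ioc_subset_Icc_self (by simpa [Set.uIoc_of_le (zero_le_one (α := ℝ))] using ht)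
      exact hC (ε, t) ⟨h1', h2'⟩)
    (intervalIntegrable_const)
    (by filter_upwards with t ht ε hε; exact hdiff t ε)
  have hkey := key.2
  -- the integral of F' 0 vanishes
  have hsymm : ∀ x u v, ⟪D2V x u, v⟫ = ⟪D2V x v, u⟫ := by
    intro x u v
    have hx : HasFDerivAt (fun y => innerSL ℝ (gradV y))
        ((innerSL ℝ (E := E)).comp (D2V x)) x :=
      (innerSL ℝ (E := E)).hasFDerivAt.comp x (hD2V x)
    have := second_derivative_symmetric hgrad hx u v
    simpa using this
  have hint : (∫ t in (0:ℝ)..1, F' 0 t) = 0 := by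
    have hφ : ∀ t ∈ Set.uIcc (0:ℝ) 1,
        HasDerivAt (fun t => ⟪deriv q t, h t⟫) (F' 0 t) t := by
      intro t ht
      rw [Set.uIcc_of_le (zero_le_one (α := ℝ))] at ht
      have hq' : HasDerivAt (deriv q) (deriv (deriv q) t) t :=
        ((hqd.2.differentiable one_ne_zero) t).hasDerivAt
      have hh' : HasDerivAt h (deriv h t) t := (hhd.1 t).hasDerivAt
      have := hq'.inner ℝ hh'
      refine this.congr_deriv (Eq.symm ?_)
      rw [hF']
      simp only [zero_smul, add_zero]
      rw [hEL t ht]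
      congr 1
      rw [real_inner_comm]
      exact hsymm (q t) (h t) (gradV (q t))
    have hintg : IntervalIntegrable (F' 0) MeasureTheory.volume 0 1 :=
      (contF'.comp (Continuous.prodMk_right (0:ℝ))).intervalIntegrable _ _
    rw [intervalIntegral.integral_eq_sub_of_hasDerivAt hφ hintg]
    simp [h0, h1]
  rw [hint] at hkey
  exact hkey
end

section
/- (Hopf–Cole for the Yasue problem.) Let γ > 0, d ≥ 1, and let ρ, ψ : ℝ × ℝᵈ → ℝ be C² with ρ(t,x) > 0 for all (t,x). Suppose that everywhere on ℝ × ℝᵈ: ∂ₜψ + (1/2)‖∇ₓψ‖² = −2γ² Δₓ(√ρ)/√ρ and ∂ₜρ + divₓ(ρ ∇ₓψ) = 0. Then η(t,x) := √(ρ(t,x)) exp(ψ(t,x)/(2γ)) satisfies the backward heat equation ∂ₜη = −γ Δₓη, and η*(t,x) := √(ρ(t,x)) exp(−ψ(t,x)/(2γ)) satisfies the forward heat equation ∂ₜη* = γ Δₓη*, everywhere on ℝ × ℝᵈ. -/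
section aux
variable {d : ℕ}

private lemma fdmul (f g : ℝ × (Fin d → ℝ) → ℝ) (p v : ℝ × (Fin d → ℝ))
    (hf : DifferentiableAt ℝ f p) (hg : DifferentiableAt ℝ g p) :
    fderiv ℝ (fun q => f q * g q) p v = fderiv ℝ f p v * g p + f p * fderiv ℝ g p v := by
  rw [fderiv_fun_mul hf hg]; simp; ring

private lemma fdsqrt (ρ : ℝ × (Fin d → ℝ) → ℝ) (p v : ℝ × (Fin d → ℝ))
    (hρ : DifferentiableAt ℝ ρ p) (h0 : ρ p ≠ 0) :
    fderiv ℝ (fun q => Real.sqrt (ρ q)) p v = fderiv ℝ ρ p v / (2 * Real.sqrt (ρ p)) := by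
  have h : HasFDerivAt (fun q => Real.sqrt (ρ q)) ((1 / (2 * Real.sqrt (ρ p))) • fderiv ℝ ρ p) p :=
    (Real.hasDerivAt_sqrt h0).comp_hasFDerivAt p hρ.hasFDerivAt
  rw [h.fderiv]; simp; ring

private lemma fdexp (f : ℝ × (Fin d → ℝ) → ℝ) (c : ℝ) (p v : ℝ × (Fin d → ℝ))
    (hf : DifferentiableAt ℝ f p) :
    fderiv ℝ (fun q => Real.exp (f q * c)) p v = fderiv ℝ f p v * c * Real.exp (f p * c) := by
  have h : HasFDerivAt (fun q => Real.exp (f q * c))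
      (Real.exp (f p * c) • fderiv ℝ (fun y => f y * c) p) p :=
    (hf.mul_const c).hasFDerivAt.exp
  rw [h.fderiv]; simp [fderiv_mul_const hf]; ring

private lemma cd_fd (f : ℝ × (Fin d → ℝ) → ℝ) (hf : ContDiff ℝ 2 f) (v : ℝ × (Fin d → ℝ)) :
    ContDiff ℝ 1 (fun p => fderiv ℝ f p v) := by
  have h := hf.fderiv_right (m := 1) (by norm_num)
  exact (ContinuousLinearMap.apply ℝ ℝ v).contDiff.comp h

/-- Generic Hopf–Cole computation: if `A, ψ` are C² with
continuity-type and HJB-type identities, then `A·exp(cψ)` solves a heat equation. -/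
private lemma key (c k : ℝ) (A ψ : ℝ × (Fin d → ℝ) → ℝ)
    (hA : ContDiff ℝ 2 A) (hψ : ContDiff ℝ 2 ψ)
    (hck : 2*c*k = -1)
    (C2 : ∀ p, pt A p + ((∑ i, px A i p * px ψ i p)
        + (A p/2) * ∑ i, px (px ψ i) i p) = 0)
    (H2 : ∀ p, c * (A p * pt ψ p + (A p/2) * ∑ i, (px ψ i p)^2)
        = k * ∑ i, px (px A i) i p) :
    ∀ p, pt (fun q => A q * Real.exp (ψ q * c)) p
       = k * ∑ i, px (px (fun q => A q * Real.exp (ψ q * c)) i) i p := by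
  have hAd : ∀ p, DifferentiableAt ℝ A p := fun p => (hA.differentiable (by norm_num)).differentiableAt
  have hψd : ∀ p, DifferentiableAt ℝ ψ p := fun p => (hψ.differentiable (by norm_num)).differentiableAt
  have hE : ContDiff ℝ 2 (fun q => Real.exp (ψ q * c)) :=
    Real.contDiff_exp.comp (hψ.mul contDiff_const)
  have hEd : ∀ p, DifferentiableAt ℝ (fun q => Real.exp (ψ q * c)) p :=
    fun p => (hE.differentiable (by norm_num)).differentiableAt
  have dE : ∀ (p v : ℝ × (Fin d → ℝ)), fderiv ℝ (fun q => Real.exp (ψ q * c)) p v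
      = fderiv ℝ ψ p v * c * Real.exp (ψ p * c) := fun p v => fdexp ψ c p v (hψd p)
  have dη : ∀ (p v : ℝ × (Fin d → ℝ)), fderiv ℝ (fun q => A q * Real.exp (ψ q * c)) p v
      = fderiv ℝ A p v * Real.exp (ψ p * c)
        + A p * (fderiv ℝ ψ p v * c * Real.exp (ψ p * c)) := by
    intro p v
    rw [fdmul A (fun q => Real.exp (ψ q * c)) p v (hAd p) (hEd p), dE p v]
  have hψi : ∀ i : Fin d, ContDiff ℝ 1 (px ψ i) := fun i => cd_fd ψ hψ _
  have hAi : ∀ i : Fin d, ContDiff ℝ 1 (px A i) := fun i => cd_fd A hA _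
  have hfun : ∀ i : Fin d, px (fun q => A q * Real.exp (ψ q * c)) i
      = fun q => px A i q * Real.exp (ψ q * c) + A q * (px ψ i q * c * Real.exp (ψ q * c)) := by
    intro i; funext q; exact dη q (0, Pi.single i 1)
  have dηη : ∀ (p : ℝ × (Fin d → ℝ)) (i : Fin d),
      px (px (fun q => A q * Real.exp (ψ q * c)) i) i p
      = (px (px A i) i p + 2*c*(px A i p)*(px ψ i p) + c*A p*(px (px ψ i) i p)
          + c^2*A p*(px ψ i p)^2) * Real.exp (ψ p * c) := by
    intro p i
    have d1 : DifferentiableAt ℝ (fun q => px A i q * Real.exp (ψ q * c)) p :=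
      ((hAi i).differentiable one_ne_zero p).mul (hEd p)
    have dg : DifferentiableAt ℝ (fun q => px ψ i q * c * Real.exp (ψ q * c)) p :=
      (((hψi i).differentiable one_ne_zero p).mul_const c).mul (hEd p)
    have d2 : DifferentiableAt ℝ (fun q => A q * (px ψ i q * c * Real.exp (ψ q * c))) p :=
      (hAd p).mul dg
    have step : px (px (fun q => A q * Real.exp (ψ q * c)) i) i p
        = fderiv ℝ (fun q => px A i q * Real.exp (ψ q * c)
            + A q * (px ψ i q * c * Real.exp (ψ q * c))) p (0, Pi.single i 1) := by
      rw [show px (px (fun q => A q * Real.exp (ψ q * c)) i) i p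
          = fderiv ℝ (px (fun q => A q * Real.exp (ψ q * c)) i) p (0, Pi.single i 1) from rfl,
        hfun i]
    rw [step, fderiv_fun_add d1 d2]
    simp only [ContinuousLinearMap.add_apply]
    rw [fdmul (px A i) (fun q => Real.exp (ψ q * c)) p _ ((hAi i).differentiable one_ne_zero p) (hEd p),
      fdmul A (fun q => px ψ i q * c * Real.exp (ψ q * c)) p _ (hAd p) dg,
      fdmul (fun q => px ψ i q * c) (fun q => Real.exp (ψ q * c)) p _
        (((hψi i).differentiable one_ne_zero p).mul_const c) (hEd p),
      fderiv_mul_const ((hψi i).differentiable one_ne_zero p) c]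
    simp only [ContinuousLinearMap.smul_apply, smul_eq_mul]
    rw [dE p (0, Pi.single i 1)]
    simp only [px, pt]
    ring
  intro p
  have hsum : ∑ i, px (px (fun q => A q * Real.exp (ψ q * c)) i) i p
      = ((∑ i, px (px A i) i p) + 2*c*(∑ i, px A i p * px ψ i p)
          + c*A p*(∑ i, px (px ψ i) i p) + c^2*A p*(∑ i, (px ψ i p)^2))
        * Real.exp (ψ p * c) := by
    have e1 : ∑ i, px (px (fun q => A q * Real.exp (ψ q * c)) i) i p
        = ∑ i : Fin d, ((px (px A i) i p) * Real.exp (ψ p * c)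
            + (2*c) * ((px A i p * px ψ i p) * Real.exp (ψ p * c))
            + (c*A p) * ((px (px ψ i) i p) * Real.exp (ψ p * c))
            + (c^2*A p) * (((px ψ i p)^2) * Real.exp (ψ p * c))) :=
      Finset.sum_congr rfl fun i _ => by rw [dηη p i]; ring
    rw [e1]
    simp only [Finset.sum_add_distrib, ← Finset.sum_mul, ← Finset.mul_sum]
    ring
  have hL : pt (fun q => A q * Real.exp (ψ q * c)) p
      = fderiv ℝ A p (1, 0) * Real.exp (ψ p * c)
        + A p * (fderiv ℝ ψ p (1, 0) * c * Real.exp (ψ p * c)) := dη p (1, 0)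
  rw [hL, hsum]
  have hC := C2 p
  have hH := H2 p
  simp only [pt, px] at hC hH ⊢
  linear_combination (Real.exp (ψ p * c)) * hC + (Real.exp (ψ p * c)) * hH
    - ((∑ i, fderiv ℝ A p (0, Pi.single i 1) * fderiv ℝ ψ p (0, Pi.single i 1))
        + A p * (∑ i, fderiv ℝ (px ψ i) p (0, Pi.single i 1)) / 2
        + c * A p * (∑ i, (fderiv ℝ ψ p (0, Pi.single i 1))^2) / 2)
      * Real.exp (ψ p * c) * hck

end aux

private lemma hc_main (γ : ℝ) (hγ : 0 < γ) {d : ℕ}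
    (ρ ψ : ℝ × (Fin d → ℝ) → ℝ) (hρ : ContDiff ℝ 2 ρ) (hψ : ContDiff ℝ 2 ψ)
    (hpos : ∀ p, 0 < ρ p)
    (hHJB : ∀ p, pt ψ p + (1/2) * ∑ i, (px ψ i p)^2
      = -2*γ^2 * (∑ i, px (px (fun q => Real.sqrt (ρ q)) i) i p) / Real.sqrt (ρ p))
    (hcont : ∀ p, pt ρ p + ∑ i, px (fun q => ρ q * px ψ i q) i p = 0)
    (c k : ℝ) (hcγk : -2*c*γ^2 = k) (hck : 2*c*k = -1) :
    ∀ p, pt (fun q => Real.sqrt (ρ q) * Real.exp (ψ q * c)) p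
       = k * ∑ i, px (px (fun q => Real.sqrt (ρ q) * Real.exp (ψ q * c)) i) i p := by
  have hAne : ∀ p, Real.sqrt (ρ p) ≠ 0 := fun p => (Real.sqrt_pos.2 (hpos p)).ne'
  have hA : ContDiff ℝ 2 (fun q => Real.sqrt (ρ q)) := by
    rw [contDiff_iff_contDiffAt]
    intro p
    exact (Real.contDiffAt_sqrt (hpos p).ne').comp p hρ.contDiffAt
  have hρd : ∀ p, DifferentiableAt ℝ ρ p :=
    fun p => (hρ.differentiable (by norm_num)).differentiableAt
  have dρ : ∀ (p v : ℝ × (Fin d → ℝ)), fderiv ℝ ρ p v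
      = 2*Real.sqrt (ρ p) * fderiv ℝ (fun q => Real.sqrt (ρ q)) p v := by
    intro p v
    rw [fdsqrt ρ p v (hρd p) (hpos p).ne']
    field_simp [hAne p]
  have hterm : ∀ (p : ℝ × (Fin d → ℝ)) (i : Fin d), px (fun q => ρ q * px ψ i q) i p
      = 2*Real.sqrt (ρ p)*(px (fun q => Real.sqrt (ρ q)) i p * px ψ i p)
        + (Real.sqrt (ρ p))^2 * px (px ψ i) i p := by
    intro p i
    have hm := fdmul ρ (px ψ i) p (0, Pi.single i 1) (hρd p)
      (((cd_fd ψ hψ (0, Pi.single i 1)).differentiable one_ne_zero) p)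
    have hd := dρ p (0, Pi.single i 1)
    have hsq : Real.sqrt (ρ p)^2 = ρ p := Real.sq_sqrt (hpos p).le
    simp only [px] at hm ⊢
    linear_combination hm + fderiv ℝ ψ p (0, Pi.single i 1) * hd
      - fderiv ℝ (px ψ i) p (0, Pi.single i 1) * hsq
  have hS : ∀ p : ℝ × (Fin d → ℝ), ∑ i, px (fun q => ρ q * px ψ i q) i p
      = 2*Real.sqrt (ρ p)*(∑ i, px (fun q => Real.sqrt (ρ q)) i p * px ψ i p)
        + (Real.sqrt (ρ p))^2 * ∑ i, px (px ψ i) i p := by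
    intro p
    rw [Finset.sum_congr rfl fun i _ => hterm p i, Finset.sum_add_distrib,
      ← Finset.mul_sum, ← Finset.mul_sum]
  have C2 : ∀ p : ℝ × (Fin d → ℝ), pt (fun q => Real.sqrt (ρ q)) p
      + ((∑ i, px (fun q => Real.sqrt (ρ q)) i p * px ψ i p)
          + (Real.sqrt (ρ p)/2) * ∑ i, px (px ψ i) i p) = 0 := by
    intro p
    have h := hcont p
    have hptρ : pt ρ p = 2*Real.sqrt (ρ p) * pt (fun q => Real.sqrt (ρ q)) p := dρ p (1, 0)
    have h0 : 2*Real.sqrt (ρ p) * (pt (fun q => Real.sqrt (ρ q)) p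
        + ((∑ i, px (fun q => Real.sqrt (ρ q)) i p * px ψ i p)
            + (Real.sqrt (ρ p)/2) * ∑ i, px (px ψ i) i p)) = 0 := by
      linear_combination h - hptρ - hS p
    exact (mul_eq_zero.mp h0).resolve_left (mul_ne_zero two_ne_zero (hAne p))
  have H2 : ∀ p : ℝ × (Fin d → ℝ),
      c * (Real.sqrt (ρ p) * pt ψ p + (Real.sqrt (ρ p)/2) * ∑ i, (px ψ i p)^2)
      = k * ∑ i, px (px (fun q => Real.sqrt (ρ q)) i) i p := by
    intro p
    have h2 : Real.sqrt (ρ p) * (pt ψ p + (1/2) * ∑ i, (px ψ i p)^2)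
        = -2*γ^2 * ∑ i, px (px (fun q => Real.sqrt (ρ q)) i) i p := by
      rw [hHJB p, mul_comm, div_mul_cancel₀ _ (hAne p)]
    linear_combination c * h2 + (∑ i, px (px (fun q => Real.sqrt (ρ q)) i) i p) * hcγk
  exact key c k (fun q => Real.sqrt (ρ q)) ψ hA hψ hck C2 H2

/-- Hopf–Cole for the Yasue problem: if `ρ > 0` and `ψ` are C²
and solve `∂ₜψ + (1/2)‖∇ₓψ‖² = −2γ²Δₓ(√ρ)/√ρ` and the continuity equation
`∂ₜρ + divₓ(ρ∇ₓψ) = 0`, then `η = √ρ exp(ψ/(2γ))` solves the backward heat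
equation and `η* = √ρ exp(−ψ/(2γ))` solves the forward heat equation. -/
theorem stmt16 (γ : ℝ) (hγ : 0 < γ) {d : ℕ} (hd : 1 ≤ d)
    (ρ ψ : ℝ × (Fin d → ℝ) → ℝ) (hρ : ContDiff ℝ 2 ρ) (hψ : ContDiff ℝ 2 ψ)
    (hpos : ∀ p, 0 < ρ p)
    (hHJB : ∀ p, pt ψ p + (1/2) * ∑ i, (px ψ i p)^2
      = -2*γ^2 * (∑ i, px (px (fun q => Real.sqrt (ρ q)) i) i p) / Real.sqrt (ρ p))
    (hcont : ∀ p, pt ρ p + ∑ i, px (fun q => ρ q * px ψ i q) i p = 0) :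
    (∀ p, pt (fun q => Real.sqrt (ρ q) * Real.exp (ψ q / (2*γ))) p
        = -γ * ∑ i, px (px (fun q => Real.sqrt (ρ q) * Real.exp (ψ q / (2*γ))) i) i p)
    ∧ (∀ p, pt (fun q => Real.sqrt (ρ q) * Real.exp (-ψ q / (2*γ))) p
        = γ * ∑ i, px (px (fun q => Real.sqrt (ρ q) * Real.exp (-ψ q / (2*γ))) i) i p) := by
  constructor
  · have e1 : (fun q : ℝ × (Fin d → ℝ) => Real.sqrt (ρ q) * Real.exp (ψ q / (2*γ)))
        = (fun q => Real.sqrt (ρ q) * Real.exp (ψ q * (2*γ)⁻¹)) := by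
      funext q; rw [div_eq_mul_inv]
    rw [e1]
    exact hc_main γ hγ ρ ψ hρ hψ hpos hHJB hcont (2*γ)⁻¹ (-γ)
      (by field_simp; try ring) (by field_simp; try ring)
  · have e2 : (fun q : ℝ × (Fin d → ℝ) => Real.sqrt (ρ q) * Real.exp (-ψ q / (2*γ)))
        = (fun q => Real.sqrt (ρ q) * Real.exp (ψ q * (-(2*γ)⁻¹))) := by
      funext q
      rw [show -ψ q / (2*γ) = ψ q * (-(2*γ)⁻¹) by ring]
    rw [e2]
    exact hc_main γ hγ ρ ψ hρ hψ hpos hHJB hcont (-(2*γ)⁻¹) γ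
      (by field_simp; try ring) (by field_simp; try ring)
end
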